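/- arXiv:2002.08120 — 13 statements merged into one kernel-verified Lean document; each statement's English description precedes it below -/
import Mathlib

section
/- For every positive integer n, Cond(V_n) = (n / rad(n)) · Cond(V_{rad(n)}), where rad(n) is the product of the distinct prime factors of n. -/
open Matrix Polynomial BigOperators

/-- The Frobenius norm of a square complex matrix. -/
noncomputable def frobNorm {k : ℕ} (A : Matrix (Fin k) (Fin k) ℂ) : ℝ :=
  Real.sqrt (∑ i, ∑ j, ‖A i j‖ ^ 2)

/-- The condition number `Cond(A) = ‖A‖ ‖A⁻¹‖` (Frobenius norm). -/
noncomputable def condNum {k : ℕ} (A : Matrix (Fin k) (Fin k) ℂ) : ℝ :=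
  frobNorm A * frobNorm A⁻¹

/-- The Vandermonde matrix with (i,j) entry `ζ i ^ j` (0-indexed). -/
def vand {m : ℕ} (ζ : Fin m → ℂ) : Matrix (Fin m) (Fin m) ℂ :=
  Matrix.of fun i j => ζ i ^ (j : ℕ)

/-- The radical of `n`: the product of the distinct prime factors of `n`. -/
def rad (n : ℕ) : ℕ := ∏ p ∈ n.primeFactors, p

/-- The Ramanujan sum `c_n(t)`: the sum of the `t`-th powers of the
primitive `n`-th roots of unity in `ℂ`. -/
noncomputable def ram (n : ℕ) (t : ℤ) : ℂ := ∑ z ∈ primitiveRoots n ℂ, z ^ t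

-- aux lemmas
lemma rad_dvd (n : ℕ) : rad n ∣ n := Nat.prod_primeFactors_dvd n

lemma rad_pos (n : ℕ) : 0 < rad n :=
  Finset.prod_pos fun _ hp => (Nat.prime_of_mem_primeFactors hp).pos

lemma primeFactors_rad (n : ℕ) : (rad n).primeFactors = n.primeFactors :=
  Nat.primeFactors_prod fun _ hp => Nat.prime_of_mem_primeFactors hp

lemma totient_rad (n : ℕ) :
    n.totient = (n / rad n) * (rad n).totient := by
  have h1 := Nat.totient_eq_div_primeFactors_mul n
  have h2 := Nat.totient_eq_div_primeFactors_mul (rad n)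
  rw [primeFactors_rad, show (∏ p ∈ n.primeFactors, p) = rad n from rfl,
    Nat.div_self (rad_pos n), one_mul] at h2
  rw [h1, h2]; rfl

lemma lt_aux {s ρ : ℕ} (a : Fin ρ) (j : Fin s) : s * (a : ℕ) + (j : ℕ) < s * ρ := by
  calc s * (a : ℕ) + (j : ℕ) < s * (a : ℕ) + s := by omega
  _ = s * ((a : ℕ) + 1) := by ring
  _ ≤ s * ρ := Nat.mul_le_mul_left _ a.2

lemma sum_split {M : Type*} [AddCommMonoid M] {m s ρ : ℕ} (hm : m = s * ρ)
    (f : Fin m → M) (F : Fin ρ → Fin s → M)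
    (hF : ∀ (a : Fin ρ) (j : Fin s), f ⟨s * a + j, hm ▸ lt_aux a j⟩ = F a j) :
    ∑ p, f p = ∑ a : Fin ρ, ∑ j : Fin s, F a j := by
  classical
  subst hm
  have hbij : Function.Bijective (fun x : Fin ρ × Fin s => (⟨s * x.1 + x.2, lt_aux x.1 x.2⟩ : Fin (s * ρ))) := by
    rw [Fintype.bijective_iff_injective_and_card]
    constructor
    · rintro ⟨a1, j1⟩ ⟨a2, j2⟩ h
      have hs : 0 < s := j1.pos
      have h' : s * (a1 : ℕ) + j1 = s * a2 + j2 := congrArg Fin.val h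
      have ha : (a1 : ℕ) = a2 := by
        have e1 : (s * (a1 : ℕ) + j1) / s = a1 := by
          rw [Nat.mul_add_div hs, Nat.div_eq_of_lt j1.2, Nat.add_zero]
        have e2 : (s * (a2 : ℕ) + j2) / s = a2 := by
          rw [Nat.mul_add_div hs, Nat.div_eq_of_lt j2.2, Nat.add_zero]
        rw [← e1, ← e2, h']
      rw [ha] at h'
      have hj : (j1 : ℕ) = j2 := by omega
      exact Prod.ext (Fin.ext ha) (Fin.ext hj)
    · simp [mul_comm]
  calc ∑ p, f p = ∑ x : Fin ρ × Fin s, f ⟨s * x.1 + x.2, lt_aux x.1 x.2⟩ :=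
        (Fintype.sum_bijective _ hbij _ f (fun x => rfl)).symm
    _ = ∑ a : Fin ρ, ∑ j : Fin s, F a j := by
        rw [Fintype.sum_prod_type]
        exact Finset.sum_congr rfl fun a _ => Finset.sum_congr rfl fun j _ => hF a j

/-- For every positive integer `n`,
`Cond(V_n) = (n / rad n) * Cond(V_{rad n})`. -/
theorem cond_vand_eq_div_rad_mul_cond_vand_rad (n : ℕ) (hn : 0 < n)
    (ζ : Fin n.totient → ℂ) (hζinj : Function.Injective ζ)
    (hζ : ∀ i, IsPrimitiveRoot (ζ i) n)
    (ξ : Fin (rad n).totient → ℂ) (hξinj : Function.Injective ξ)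
    (hξ : ∀ i, IsPrimitiveRoot (ξ i) (rad n)) :
    condNum (vand ζ) = ((n : ℝ) / (rad n : ℝ)) * condNum (vand ξ) := by
  classical
  have hr0 : 0 < rad n := rad_pos n
  have hrdvd : rad n ∣ n := rad_dvd n
  have hs0 : 0 < n / rad n := Nat.div_pos (Nat.le_of_dvd hn hrdvd) hr0
  have hsr : n = (n / rad n) * rad n := (Nat.div_mul_cancel hrdvd).symm
  have hm : n.totient = (n / rad n) * (rad n).totient := totient_rad n
  -- ξ is surjective onto primitive (rad n)-th roots
  have hsurj : ∀ z : ℂ, IsPrimitiveRoot z (rad n) → ∃ b, ξ b = z := by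
    intro z hz
    have himg : Finset.univ.image ξ ⊆ primitiveRoots (rad n) ℂ := by
      intro w hw
      obtain ⟨b, -, rfl⟩ := Finset.mem_image.mp hw
      exact (mem_primitiveRoots hr0).mpr (hξ b)
    have heq : Finset.univ.image ξ = primitiveRoots (rad n) ℂ := by
      apply Finset.eq_of_subset_of_card_le himg
      rw [Complex.card_primitiveRoots, Finset.card_image_of_injective _ hξinj,
        Finset.card_univ, Fintype.card_fin]
    have : z ∈ Finset.univ.image ξ := heq ▸ (mem_primitiveRoots hr0).mpr hz
    obtain ⟨b, -, hb⟩ := Finset.mem_image.mp this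
    exact ⟨b, hb⟩
  have hps : ∀ i, IsPrimitiveRoot (ζ i ^ (n / rad n)) (rad n) := fun i => (hζ i).pow hn hsr
  choose τ hτ using fun i => hsurj _ (hps i)
  -- invertibility of vand ξ
  have hdetξ : IsUnit (vand ξ).det := by
    rw [show vand ξ = Matrix.vandermonde ξ from rfl, Matrix.det_vandermonde]
    apply isUnit_iff_ne_zero.mpr
    apply Finset.prod_ne_zero_iff.mpr
    intro i _
    apply Finset.prod_ne_zero_iff.mpr
    intro j hj
    rw [Finset.mem_Ioi] at hj
    exact sub_ne_zero.mpr fun h => absurd (hξinj h) (ne_of_gt hj)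
  have hU : vand ξ * (vand ξ)⁻¹ = 1 := Matrix.mul_nonsing_inv _ hdetξ
  -- the candidate inverse W
  have hdivlt : ∀ p : Fin n.totient, (p : ℕ) / (n / rad n) < (rad n).totient := by
    intro p
    rw [Nat.div_lt_iff_lt_mul hs0, mul_comm, ← hm]
    exact p.2
  set W : Matrix (Fin n.totient) (Fin n.totient) ℂ :=
    Matrix.of (fun p k => ((n / rad n : ℕ) : ℂ)⁻¹ *
      (vand ξ)⁻¹ ⟨(p : ℕ) / (n / rad n), hdivlt p⟩ (τ k) *
      (ζ k)⁻¹ ^ ((p : ℕ) % (n / rad n))) with hWdef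
  have hWent : ∀ (a : Fin (rad n).totient) (j : Fin (n / rad n)) (k : Fin n.totient)
      (h : (n / rad n) * (a : ℕ) + (j : ℕ) < n.totient),
      W ⟨(n / rad n) * (a : ℕ) + (j : ℕ), h⟩ k =
        ((n / rad n : ℕ) : ℂ)⁻¹ * (vand ξ)⁻¹ a (τ k) * (ζ k)⁻¹ ^ (j : ℕ) := by
    intro a j k h
    have hdiv : ((n / rad n) * (a : ℕ) + (j : ℕ)) / (n / rad n) = a := by
      rw [Nat.mul_add_div hs0, Nat.div_eq_of_lt j.2, Nat.add_zero]
    have hmod : ((n / rad n) * (a : ℕ) + (j : ℕ)) % (n / rad n) = (j : ℕ) := by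
      rw [Nat.mul_add_mod, Nat.mod_eq_of_lt j.2]
    have e0 : W ⟨(n / rad n) * (a : ℕ) + (j : ℕ), h⟩ k
        = ((n / rad n : ℕ) : ℂ)⁻¹ *
          (vand ξ)⁻¹ ⟨((n / rad n) * (a : ℕ) + (j : ℕ)) / (n / rad n),
            hdivlt ⟨(n / rad n) * (a : ℕ) + (j : ℕ), h⟩⟩ (τ k) *
          (ζ k)⁻¹ ^ (((n / rad n) * (a : ℕ) + (j : ℕ)) % (n / rad n)) := rfl
    rw [e0, hmod,
      show (⟨((n / rad n) * (a : ℕ) + (j : ℕ)) / (n / rad n),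
        hdivlt ⟨(n / rad n) * (a : ℕ) + (j : ℕ), h⟩⟩ : Fin (rad n).totient) = a from Fin.ext hdiv]
  have hVW : vand ζ * W = 1 := by
    ext i k
    rw [Matrix.mul_apply]
    rw [sum_split hm (fun p => vand ζ i p * W p k)
      (fun a j => ((n / rad n : ℕ) : ℂ)⁻¹ *
        ((ξ (τ i) ^ (a : ℕ) * (vand ξ)⁻¹ a (τ k)) * (ζ i * (ζ k)⁻¹) ^ (j : ℕ)))
      (by
        intro a j
        have e1 : vand ζ i ⟨(n / rad n) * (a : ℕ) + (j : ℕ), hm ▸ lt_aux a j⟩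
            = ζ i ^ ((n / rad n) * (a : ℕ) + (j : ℕ)) := rfl
        rw [e1, hWent a j k (hm ▸ lt_aux a j), pow_add, pow_mul, ← hτ i, mul_pow]
        ring)]
    have hsum : ∀ c : ℂ, (∑ a : Fin (rad n).totient, ∑ j : Fin (n / rad n),
        c * ((ξ (τ i) ^ (a : ℕ) * (vand ξ)⁻¹ a (τ k)) * (ζ i * (ζ k)⁻¹) ^ (j : ℕ)))
        = c * ((∑ a : Fin (rad n).totient, ξ (τ i) ^ (a : ℕ) * (vand ξ)⁻¹ a (τ k)) *
            (∑ j : Fin (n / rad n), (ζ i * (ζ k)⁻¹) ^ (j : ℕ))) := by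
      intro c
      rw [Finset.sum_mul_sum]
      simp only [Finset.mul_sum]
    rw [hsum]
    have hA : (∑ a : Fin (rad n).totient, ξ (τ i) ^ (a : ℕ) * (vand ξ)⁻¹ a (τ k))
        = (1 : Matrix (Fin (rad n).totient) (Fin (rad n).totient) ℂ) (τ i) (τ k) := by
      rw [← hU, Matrix.mul_apply]; rfl
    rw [hA]
    have hsC : ((n / rad n : ℕ) : ℂ) ≠ 0 := Nat.cast_ne_zero.mpr hs0.ne'
    by_cases hik : τ i = τ k
    · rw [hik, Matrix.one_apply_eq]
      by_cases hik2 : i = k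
      · subst hik2
        have hz : ζ i ≠ 0 := (hζ i).ne_zero hn.ne'
        rw [mul_inv_cancel₀ hz, Matrix.one_apply_eq]
        simp only [one_pow, Finset.sum_const, Finset.card_univ, Fintype.card_fin,
          nsmul_eq_mul, mul_one, one_mul]
        exact inv_mul_cancel₀ hsC
      · have hzk : ζ k ≠ 0 := (hζ k).ne_zero hn.ne'
        have hx1 : ζ i * (ζ k)⁻¹ ≠ 1 := by
          intro h
          rw [mul_inv_eq_one₀ hzk] at h
          exact hik2 (hζinj h)
        have hxs : (ζ i * (ζ k)⁻¹) ^ (n / rad n) = 1 := by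
          rw [mul_pow, inv_pow, ← hτ i, ← hτ k, hik]
          exact mul_inv_cancel₀ ((hξ (τ k)).ne_zero hr0.ne')
        have hB : ∑ j : Fin (n / rad n), (ζ i * (ζ k)⁻¹) ^ (j : ℕ) = 0 := by
          rw [Fin.sum_univ_eq_sum_range, geom_sum_eq hx1, hxs, sub_self, zero_div]
        rw [hB, Matrix.one_apply_ne hik2]
        ring
    · rw [Matrix.one_apply_ne hik, Matrix.one_apply_ne (fun h => hik (by rw [h]))]
      ring
  have hVinv : (vand ζ)⁻¹ = W := Matrix.inv_eq_right_inv hVW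
  have hsR : ((n / rad n : ℕ) : ℝ) ≠ 0 := Nat.cast_ne_zero.mpr hs0.ne'
  have habsζ : ∀ i, ‖ζ i‖ = 1 := fun i => by
    exact Complex.norm_eq_one_of_pow_eq_one (hζ i).pow_eq_one hn.ne'
  have habsξ : ∀ b, ‖ξ b‖ = 1 := fun b => by
    exact Complex.norm_eq_one_of_pow_eq_one (hξ b).pow_eq_one hr0.ne'
  have hfV : frobNorm (vand ζ) = (n.totient : ℝ) := by
    unfold frobNorm
    have h1 : ∀ i j : Fin n.totient, ‖vand ζ i j‖ ^ 2 = 1 := by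
      intro i j
      rw [show vand ζ i j = ζ i ^ (j : ℕ) from rfl, norm_pow, habsζ, one_pow, one_pow]
    rw [show (∑ i, ∑ j, ‖vand ζ i j‖ ^ 2) = ((n.totient : ℝ)) ^ 2 by
      simp only [h1]; simp [sq]]
    exact Real.sqrt_sq (Nat.cast_nonneg _)
  have hfξ : frobNorm (vand ξ) = ((rad n).totient : ℝ) := by
    unfold frobNorm
    have h1 : ∀ i j : Fin (rad n).totient, ‖vand ξ i j‖ ^ 2 = 1 := by
      intro i j
      rw [show vand ξ i j = ξ i ^ (j : ℕ) from rfl, norm_pow, habsξ, one_pow, one_pow]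
    rw [show (∑ i, ∑ j, ‖vand ξ i j‖ ^ 2) = (((rad n).totient : ℝ)) ^ 2 by
      simp only [h1]; simp [sq]]
    exact Real.sqrt_sq (Nat.cast_nonneg _)
  -- fiber cardinalities
  have hfib : ∀ b : Fin (rad n).totient,
      (Finset.univ.filter fun k => τ k = b).card = n / rad n := by
    have hle : ∀ b ∈ (Finset.univ : Finset (Fin (rad n).totient)),
        (Finset.univ.filter fun k => τ k = b).card ≤ n / rad n := by
      intro b _
      have hsub : ((Finset.univ.filter fun k => τ k = b).image ζ)
          ⊆ (nthRoots (n / rad n) (ξ b)).toFinset := by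
        intro z hz
        obtain ⟨k, hk, rfl⟩ := Finset.mem_image.mp hz
        rw [Finset.mem_filter] at hk
        rw [Multiset.mem_toFinset, mem_nthRoots hs0, ← hk.2, hτ k]
      calc (Finset.univ.filter fun k => τ k = b).card
          = ((Finset.univ.filter fun k => τ k = b).image ζ).card :=
            (Finset.card_image_of_injective _ hζinj).symm
        _ ≤ (nthRoots (n / rad n) (ξ b)).toFinset.card := Finset.card_le_card hsub
        _ ≤ Multiset.card (nthRoots (n / rad n) (ξ b)) := Multiset.toFinset_card_le _
        _ ≤ n / rad n := Polynomial.card_nthRoots _ _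
    have hsumcard : ∑ b : Fin (rad n).totient, (Finset.univ.filter fun k => τ k = b).card
        = ∑ _b : Fin (rad n).totient, n / rad n := by
      rw [← Finset.card_eq_sum_card_fiberwise (fun k _ => Finset.mem_univ (τ k))]
      rw [Finset.card_univ, Fintype.card_fin, Finset.sum_const, Finset.card_univ,
        Fintype.card_fin, smul_eq_mul, hm, mul_comm]
    intro b
    exact (Finset.sum_eq_sum_iff_of_le hle).mp hsumcard b (Finset.mem_univ b)
  have habsinv : ∀ (k : Fin n.totient) (e : ℕ), ‖(ζ k)⁻¹ ^ e‖ = 1 := fun k e => by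
    rw [norm_pow, norm_inv, habsζ, inv_one, one_pow]
  have hWabs : ∀ (a : Fin (rad n).totient) (j : Fin (n / rad n)) (k : Fin n.totient)
      (h : (n / rad n) * (a : ℕ) + (j : ℕ) < n.totient),
      ‖W ⟨(n / rad n) * (a : ℕ) + (j : ℕ), h⟩ k‖ ^ 2
        = ((n / rad n : ℕ) : ℝ)⁻¹ ^ 2 * ‖(vand ξ)⁻¹ a (τ k)‖ ^ 2 := by
    intro a j k h
    rw [hWent a j k h, norm_mul, norm_mul, habsinv, mul_one, norm_inv,
      Complex.norm_natCast, mul_pow]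
  have hsum2 : (∑ p, ∑ k, ‖W p k‖ ^ 2)
      = ∑ a, ∑ b, ‖(vand ξ)⁻¹ a b‖ ^ 2 := by
    rw [Finset.sum_comm]
    have hcol : ∀ k : Fin n.totient, (∑ p, ‖W p k‖ ^ 2)
        = ((n / rad n : ℕ) : ℝ)⁻¹ * ∑ a, ‖(vand ξ)⁻¹ a (τ k)‖ ^ 2 := by
      intro k
      rw [sum_split hm (fun p => ‖W p k‖ ^ 2)
        (fun a _j => ((n / rad n : ℕ) : ℝ)⁻¹ ^ 2 * ‖(vand ξ)⁻¹ a (τ k)‖ ^ 2)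
        (fun a j => hWabs a j k _)]
      simp only [Finset.sum_const, Finset.card_univ, Fintype.card_fin, nsmul_eq_mul]
      rw [← Finset.mul_sum, ← Finset.mul_sum, sq]
      field_simp
    rw [Finset.sum_congr rfl (fun k _ => hcol k), ← Finset.mul_sum]
    have hfsum : (∑ k, ∑ a, ‖(vand ξ)⁻¹ a (τ k)‖ ^ 2)
        = ((n / rad n : ℕ) : ℝ) * ∑ b, ∑ a, ‖(vand ξ)⁻¹ a b‖ ^ 2 := by
      rw [← Finset.sum_fiberwise Finset.univ τ
        (fun k => ∑ a, ‖(vand ξ)⁻¹ a (τ k)‖ ^ 2), Finset.mul_sum]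
      apply Finset.sum_congr rfl
      intro b _
      rw [Finset.sum_congr rfl (fun k hk => by
        rw [show τ k = b from (Finset.mem_filter.mp hk).2])]
      rw [Finset.sum_const, hfib b, nsmul_eq_mul]
    rw [hfsum, ← mul_assoc, inv_mul_cancel₀ hsR, one_mul, Finset.sum_comm]
  have hfW : frobNorm (vand ζ)⁻¹ = frobNorm (vand ξ)⁻¹ := by
    rw [hVinv]
    unfold frobNorm
    rw [hsum2]
  have hcast : ((n / rad n : ℕ) : ℝ) = (n : ℝ) / (rad n : ℝ) :=
    Nat.cast_div hrdvd (Nat.cast_ne_zero.mpr hr0.ne')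
  have htot : ((n.totient : ℕ) : ℝ) = ((n / rad n : ℕ) : ℝ) * (((rad n).totient : ℕ) : ℝ) := by
    rw [hm]; push_cast; ring
  rw [show condNum (vand ζ) = frobNorm (vand ζ) * frobNorm (vand ζ)⁻¹ from rfl,
    show condNum (vand ξ) = frobNorm (vand ξ) * frobNorm (vand ξ)⁻¹ from rfl,
    hfV, hfξ, hfW, ← hcast, htot]
  ring
end

section
/- If n = p^k where k is a positive integer and p is a prime number, then Cond(V_n) = φ(n)·√(2(1 − 1/p)). -/
open Matrix Polynomial BigOperators

lemma sum_pow_nthRoots (N : ℕ) (hN : 0 < N) (t : ℕ) :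
    ∑ z ∈ nthRootsFinset N (1 : ℂ), z ^ t = if N ∣ t then (N : ℂ) else 0 := by
  have : NeZero N := ⟨hN.ne'⟩
  obtain ⟨w, hw⟩ : ∃ w : ℂ, IsPrimitiveRoot w N := ⟨_, Complex.isPrimitiveRoot_exp N hN.ne'⟩
  have himg : nthRootsFinset N (1 : ℂ) = (Finset.range N).image (w ^ ·) := by
    ext z
    simp only [Finset.mem_image, Finset.mem_range, mem_nthRootsFinset hN]
    constructor
    · intro hz
      obtain ⟨i, hi, rfl⟩ := hw.eq_pow_of_pow_eq_one hz
      exact ⟨i, hi, rfl⟩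
    · rintro ⟨i, -, rfl⟩
      rw [← pow_mul, mul_comm, pow_mul, hw.pow_eq_one, one_pow]
  rw [himg, Finset.sum_image (fun a ha b hb h =>
    hw.pow_inj (Finset.mem_range.mp ha) (Finset.mem_range.mp hb) h)]
  simp_rw [← pow_mul, mul_comm, pow_mul]
  by_cases hd : N ∣ t
  · have hw1 : w ^ t = 1 := (hw.pow_eq_one_iff_dvd t).mpr hd
    simp [hw1, if_pos hd]
  · have hw1 : w ^ t ≠ 1 := fun h => hd ((hw.pow_eq_one_iff_dvd t).mp h)
    rw [if_neg hd, geom_sum_eq hw1, ← pow_mul, mul_comm t, pow_mul, hw.pow_eq_one, one_pow,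
      sub_self, zero_div]

lemma primitiveRoots_prime_pow (p k : ℕ) (hp : p.Prime) (hk : 0 < k) :
    primitiveRoots (p ^ k) ℂ = nthRootsFinset (p ^ k) (1 : ℂ) \ nthRootsFinset (p ^ (k - 1)) (1 : ℂ) := by
  have hn : 0 < p ^ k := pow_pos hp.pos k
  have hq : 0 < p ^ (k - 1) := pow_pos hp.pos _
  ext z
  simp only [Finset.mem_sdiff, mem_nthRootsFinset hn, mem_nthRootsFinset hq,
    mem_primitiveRoots hn]
  constructor
  · intro hz
    refine ⟨hz.pow_eq_one, fun h => ?_⟩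
    have hdvd := (hz.pow_eq_one_iff_dvd _).mp h
    have := Nat.le_of_dvd hq hdvd
    have := Nat.pow_lt_pow_right hp.one_lt (Nat.sub_lt hk one_pos)
    omega
  · rintro ⟨h1, h2⟩
    have hdvd : orderOf z ∣ p ^ k := orderOf_dvd_of_pow_eq_one h1
    obtain ⟨j, hj, hord⟩ := (Nat.dvd_prime_pow hp).mp hdvd
    have hjk : j = k := by
      by_contra hne
      exact h2 (orderOf_dvd_iff_pow_eq_one.mp (hord ▸ pow_dvd_pow p (by omega)))
    have := IsPrimitiveRoot.orderOf z
    rwa [hord, hjk] at this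

def Cmat (m q : ℕ) : Matrix (Fin m) (Fin m) ℂ :=
  Matrix.of fun j l => if (j : ℕ) % q = (l : ℕ) % q then 1 else 0

lemma count_mod (q r s : ℕ) (hs : s < q) :
    ∑ t ∈ Finset.range (q * r), (if t % q = s then (1 : ℂ) else 0) = r := by
  induction r with
  | zero => simp
  | succ r ih =>
    rw [Nat.mul_succ, Finset.range_eq_Ico,
      ← Finset.sum_Ico_consecutive _ (Nat.zero_le (q * r)) (Nat.le_add_right _ q),
      ← Finset.range_eq_Ico, ih, Finset.sum_Ico_eq_sum_range]
    have : ∀ u ∈ Finset.range ((q * r + q) - q * r),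
        (if (q * r + u) % q = s then (1:ℂ) else 0) = if u = s then (1:ℂ) else 0 := by
      intro u hu
      simp only [Finset.mem_range] at hu
      rw [add_comm, Nat.add_mul_mod_self_left, Nat.mod_eq_of_lt (by omega)]
    rw [Finset.sum_congr rfl this]
    have h2 : ((q * r + q) - q * r) = q := by omega
    rw [h2, Finset.sum_ite_eq' (Finset.range q) s (fun _ => (1:ℂ)), if_pos (Finset.mem_range.mpr hs)]
    push_cast; ring

lemma Cmat_mul_self (q r : ℕ) (hq : 0 < q) :
    Cmat (q * r) q * Cmat (q * r) q = (r : ℂ) • Cmat (q * r) q := by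
  ext j l
  simp only [Matrix.mul_apply, Cmat, Matrix.of_apply, Matrix.smul_apply, smul_eq_mul]
  by_cases h : (j : ℕ) % q = (l : ℕ) % q
  · rw [if_pos h, mul_one]
    have : ∀ t : Fin (q * r), (if (j:ℕ) % q = (t:ℕ) % q then (1:ℂ) else 0) *
        (if (t:ℕ) % q = (l:ℕ) % q then (1:ℂ) else 0)
        = if (t:ℕ) % q = (j:ℕ) % q then (1:ℂ) else 0 := by
      intro t
      by_cases ht : (t:ℕ) % q = (j:ℕ) % q
      · rw [if_pos ht, if_pos ht.symm, if_pos (ht.trans h), one_mul]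
      · rw [if_neg ht, if_neg (fun hh => ht hh.symm), zero_mul]
    rw [Finset.sum_congr rfl (fun t _ => this t), Fin.sum_univ_eq_sum_range
      (fun t => if t % q = (j:ℕ) % q then (1:ℂ) else 0)]
    exact count_mod q r ((j:ℕ) % q) (Nat.mod_lt _ hq)
  · rw [if_neg h, mul_zero]
    apply Finset.sum_eq_zero
    intro t _
    by_cases ht : (j:ℕ) % q = (t:ℕ) % q
    · rw [if_neg (fun hh => h (ht.trans hh)), mul_zero]
    · rw [if_neg ht, zero_mul]

lemma Cmat_conjTranspose (m q : ℕ) : (Cmat m q)ᴴ = Cmat m q := by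
  ext j l
  simp only [Matrix.conjTranspose_apply, Cmat, Matrix.of_apply]
  by_cases h : (l : ℕ) % q = (j : ℕ) % q
  · rw [if_pos h, if_pos h.symm]; exact star_one ℂ
  · rw [if_neg h, if_neg (fun hh => h hh.symm)]; exact star_zero ℂ

lemma frob_sq_eq_trace {m : ℕ} (A : Matrix (Fin m) (Fin m) ℂ) :
    ((∑ i, ∑ j, (‖A i j‖) ^ 2 : ℝ) : ℂ) = Matrix.trace (A * Aᴴ) := by
  rw [Matrix.trace]
  push_cast
  simp only [Matrix.diag_apply, Matrix.mul_apply, Matrix.conjTranspose_apply]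
  refine Finset.sum_congr rfl fun i _ => Finset.sum_congr rfl fun j _ => ?_
  rw [show star (A i j) = (starRingEnd ℂ) (A i j) from rfl, Complex.mul_conj]
  norm_cast
  exact Complex.sq_norm _

lemma Cmat_mul_self' (m q r : ℕ) (hq : 0 < q) (hm : m = q * r) :
    Cmat m q * Cmat m q = (r : ℂ) • Cmat m q := by
  subst hm; exact Cmat_mul_self q r hq

lemma cond_vand_aux (n q m r : ℕ) (hq : 0 < q) (hn1 : 1 < n) (hmlt : m < n)
    (hmqr : m = q * r) (hnq : n = q * (r + 1)) (hqn : q ∣ n)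
    (ζ : Fin m → ℂ) (hpow : ∀ i, ζ i ^ n = 1)
    (hsum : ∀ t : ℕ, ∑ i, ζ i ^ t =
      (if n ∣ t then (n : ℂ) else 0) - (if q ∣ t then (q : ℂ) else 0)) :
    condNum (vand ζ) = (m : ℝ) * Real.sqrt (2 * m / n) := by
  have hn : 0 < n := by omega
  have hgram : (vand ζ)ᴴ * vand ζ
      = (n : ℂ) • (1 : Matrix (Fin m) (Fin m) ℂ) - (q : ℂ) • Cmat m q := by
    ext j l
    have hstar : ∀ i : Fin m, star (ζ i) = ζ i ^ (n - 1) := by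
      intro i
      have hzne : ζ i ≠ 0 := fun h => by
        simpa [h, zero_pow hn.ne'] using hpow i
      have h1 : ζ i * star (ζ i) = 1 := by
        rw [show star (ζ i) = (starRingEnd ℂ) (ζ i) from rfl, Complex.mul_conj]
        norm_cast
        rw [Complex.normSq_eq_norm_sq,
          Complex.norm_eq_one_of_pow_eq_one (hpow i) hn.ne', one_pow]
      have h2 : ζ i * ζ i ^ (n - 1) = 1 := by
        rw [← pow_succ']
        have hnn : n - 1 + 1 = n := by omega
        rw [hnn, hpow i]
      exact mul_left_cancel₀ hzne (h1.trans h2.symm)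
    have hentry : ((vand ζ)ᴴ * vand ζ) j l = ∑ i, ζ i ^ ((n - 1) * (j : ℕ) + (l : ℕ)) := by
      rw [Matrix.mul_apply]
      refine Finset.sum_congr rfl fun i _ => ?_
      simp only [Matrix.conjTranspose_apply, vand, Matrix.of_apply]
      rw [star_pow, hstar i, ← pow_mul, ← pow_add]
    have hdvd_iff : ∀ (d : ℕ), d ∣ n →
        (d ∣ (n - 1) * (j : ℕ) + (l : ℕ) ↔ (d : ℤ) ∣ ((l : ℕ) : ℤ) - ((j : ℕ) : ℤ)) := by
      intro d hd
      rw [← Int.natCast_dvd_natCast]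
      have hcast : (((n - 1) * (j : ℕ) + (l : ℕ) : ℕ) : ℤ)
          = (((l : ℕ) : ℤ) - ((j : ℕ) : ℤ)) + (n : ℤ) * ((j : ℕ) : ℤ) := by
        push_cast [Nat.cast_sub hn]
        ring
      rw [hcast]
      have hdn : (d : ℤ) ∣ (n : ℤ) * ((j : ℕ) : ℤ) :=
        Dvd.dvd.mul_right (Int.natCast_dvd_natCast.mpr hd) _
      exact ⟨fun h => by simpa using dvd_sub h hdn, fun h => dvd_add h hdn⟩
    have hiff1 : n ∣ (n - 1) * (j : ℕ) + (l : ℕ) ↔ j = l := by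
      rw [hdvd_iff n dvd_rfl]
      constructor
      · intro h
        have h0 : ((l : ℕ) : ℤ) - ((j : ℕ) : ℤ) = 0 := by
          refine Int.eq_zero_of_abs_lt_dvd h ?_
          have hj := j.isLt
          have hl := l.isLt
          rw [abs_lt]
          constructor <;> omega
        have : ((l : ℕ) : ℤ) = ((j : ℕ) : ℤ) := by omega
        exact Fin.ext (by exact_mod_cast this.symm)
      · rintro rfl
        simp
    have hiff2 : q ∣ (n - 1) * (j : ℕ) + (l : ℕ) ↔ (j : ℕ) % q = (l : ℕ) % q := by
      rw [hdvd_iff q hqn]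
      exact (Nat.modEq_iff_dvd).symm
    rw [hentry, hsum]
    simp only [Matrix.sub_apply, Matrix.smul_apply, Matrix.one_apply, Cmat, Matrix.of_apply,
      smul_eq_mul, mul_ite, mul_one, mul_zero]
    rw [if_congr hiff1 rfl rfl, if_congr hiff2 rfl rfl]
  set C := Cmat m q with hC_def
  have hCC : C * C = ((r : ℕ) : ℂ) • C := Cmat_mul_self' m q r hq hmqr
  set E := ((n : ℂ))⁻¹ • (1 + C) with hE_def
  have hnez : (n : ℂ) ≠ 0 := Nat.cast_ne_zero.mpr hn.ne'
  have hscalar : (n : ℂ) - q - q * (r : ℂ) = 0 := by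
    have h := congrArg (Nat.cast : ℕ → ℂ) hnq
    push_cast at h
    rw [h]
    ring
  have hE : E * ((vand ζ)ᴴ * vand ζ) = 1 := by
    rw [hgram, hE_def, smul_mul_assoc]
    have expand : (1 + C) * ((n : ℂ) • (1 : Matrix (Fin m) (Fin m) ℂ) - (q : ℂ) • C)
        = (n : ℂ) • (1 : Matrix (Fin m) (Fin m) ℂ)
          + (((n : ℂ) - q - q * (r : ℂ)) • C) := by
      rw [add_mul, one_mul, mul_sub, mul_smul_comm, mul_smul_comm, hCC, mul_one, smul_smul]
      rw [sub_smul, sub_smul]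
      abel
    rw [expand, hscalar, zero_smul, add_zero, smul_smul, inv_mul_cancel₀ hnez, one_smul]
  have hVinv : (vand ζ)⁻¹ = E * (vand ζ)ᴴ :=
    Matrix.inv_eq_left_inv (by rw [Matrix.mul_assoc, hE])
  have hEH : Eᴴ = E := by
    rw [hE_def, Matrix.conjTranspose_smul, Matrix.conjTranspose_add, Matrix.conjTranspose_one,
      hC_def, Cmat_conjTranspose]
    congr 1
    simp
  have htraceE : Matrix.trace E = 2 * m / n := by
    rw [hE_def, Matrix.trace_smul, Matrix.trace_add, Matrix.trace_one]
    have hTC : Matrix.trace C = (m : ℂ) := by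
      rw [hC_def, Matrix.trace]
      simp [Matrix.diag, Cmat]
    rw [hTC]
    simp only [Fintype.card_fin, smul_eq_mul]
    field_simp
    ring
  have habs1 : ∀ i : Fin m, ‖ζ i‖ = 1 := fun i => by
    exact Complex.norm_eq_one_of_pow_eq_one (hpow i) hn.ne'
  have hfrobV : frobNorm (vand ζ) = (m : ℝ) := by
    have h1 : ∀ i j : Fin m, ‖(vand ζ) i j‖ ^ 2 = 1 := by
      intro i j
      simp [vand, map_pow, habs1 i]
    rw [frobNorm]
    simp only [h1, Finset.sum_const, Finset.card_univ, Fintype.card_fin, nsmul_eq_mul, mul_one]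
    exact Real.sqrt_mul_self (Nat.cast_nonneg m)
  have hfrobinv_sq : (∑ i, ∑ j, ‖(vand ζ)⁻¹ i j‖ ^ 2 : ℝ) = 2 * m / n := by
    apply Complex.ofReal_injective
    rw [frob_sq_eq_trace]
    rw [hVinv, Matrix.conjTranspose_mul, Matrix.conjTranspose_conjTranspose, hEH]
    rw [← Matrix.mul_assoc, Matrix.mul_assoc E _ (vand ζ), hE, Matrix.one_mul, htraceE]
    push_cast
    ring
  rw [condNum, hfrobV, frobNorm, hfrobinv_sq]

/-- If `n = p ^ k` with `p` prime and `k ≥ 1`, then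
`Cond(V_n) = φ(n) * √(2 * (1 - 1/p))`. -/
theorem cond_vand_prime_pow (p k : ℕ) (hp : p.Prime) (hk : 0 < k)
    (ζ : Fin (p ^ k).totient → ℂ) (hζinj : Function.Injective ζ)
    (hζ : ∀ i, IsPrimitiveRoot (ζ i) (p ^ k)) :
    condNum (vand ζ) =
      ((p ^ k).totient : ℝ) * Real.sqrt (2 * (1 - 1 / (p : ℝ))) := by
  have hn : 0 < p ^ k := pow_pos hp.pos k
  have hq : 0 < p ^ (k - 1) := pow_pos hp.pos _
  have hn1 : 1 < p ^ k := Nat.one_lt_pow hk.ne' hp.one_lt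
  have hmlt : (p ^ k).totient < p ^ k := Nat.totient_lt _ hn1
  have hmqr : (p ^ k).totient = p ^ (k - 1) * (p - 1) := Nat.totient_prime_pow hp hk
  have hnqp : p ^ k = p ^ (k - 1) * p := by
    rw [← pow_succ]
    congr 1
    omega
  have hnq : p ^ k = p ^ (k - 1) * ((p - 1) + 1) := by
    rw [hnqp]
    congr 1
    have := hp.one_le
    omega
  have hqn : p ^ (k - 1) ∣ p ^ k := pow_dvd_pow p (by omega)
  have himage : Finset.univ.image ζ = primitiveRoots (p ^ k) ℂ := by
    apply Finset.eq_of_subset_of_card_le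
    · intro z hz
      simp only [Finset.mem_image, Finset.mem_univ, true_and] at hz
      obtain ⟨i, rfl⟩ := hz
      exact (mem_primitiveRoots hn).2 (hζ i)
    · rw [Finset.card_image_of_injective _ hζinj, Finset.card_univ, Fintype.card_fin,
        Complex.card_primitiveRoots]
  have hsub : nthRootsFinset (p ^ (k - 1)) (1 : ℂ) ⊆ nthRootsFinset (p ^ k) (1 : ℂ) := by
    intro z hz
    rw [mem_nthRootsFinset hq] at hz
    rw [mem_nthRootsFinset hn, hnqp, pow_mul, hz, one_pow]
  have hsum : ∀ t : ℕ, ∑ i, ζ i ^ t =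
      (if p ^ k ∣ t then ((p ^ k : ℕ) : ℂ) else 0)
        - (if p ^ (k - 1) ∣ t then ((p ^ (k - 1) : ℕ) : ℂ) else 0) := by
    intro t
    have h1 : ∑ i, ζ i ^ t = ∑ z ∈ Finset.univ.image ζ, z ^ t :=
      (Finset.sum_image (fun a _ b _ h => hζinj h)).symm
    rw [h1, himage, primitiveRoots_prime_pow p k hp hk, Finset.sum_sdiff_eq_sub hsub,
      sum_pow_nthRoots _ hn t, sum_pow_nthRoots _ hq t]
  have key := cond_vand_aux (p ^ k) (p ^ (k - 1)) (p ^ k).totient (p - 1)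
    hq hn1 hmlt hmqr hnq hqn ζ (fun i => (hζ i).pow_eq_one) hsum
  rw [key]
  congr 1
  congr 1
  have hp0 : (p : ℝ) ≠ 0 := Nat.cast_ne_zero.mpr hp.pos.ne'
  have hq0 : ((p ^ (k - 1) : ℕ) : ℝ) ≠ 0 := Nat.cast_ne_zero.mpr hq.ne'
  have hm' : (((p ^ k).totient : ℕ) : ℝ) = ((p ^ (k - 1) : ℕ) : ℝ) * ((p : ℝ) - 1) := by
    rw [hmqr]
    push_cast [Nat.cast_sub hp.one_le]
    ring
  have hn' : (((p ^ k : ℕ)) : ℝ) = ((p ^ (k - 1) : ℕ) : ℝ) * (p : ℝ) := by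
    rw [hnqp]
    push_cast
    ring
  rw [hm', hn']
  field_simp
end

section
/- If n = 2^k · p^ℓ where k and ℓ are positive integers and p is an odd prime number, then Cond(V_n) = φ(n)·√(2(1 − 1/p)). -/
open Matrix Polynomial BigOperators

open Finset

lemma geom_zero {x : ℂ} {N : ℕ} (hx : x ≠ 1) (hN : x ^ N = 1) :
    ∑ a ∈ Finset.range N, x ^ a = 0 := by
  rw [geom_sum_eq hx, hN]; simp

lemma geom_trunc {x : ℂ} {p : ℕ} (hp : 0 < p) (hx : x ≠ 1) (hN : x ^ p = 1) :
    ∑ a ∈ Finset.range (p - 1), x ^ a = -x⁻¹ := by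
  have h0 : x ≠ 0 := by
    rintro rfl; rw [zero_pow hp.ne'] at hN; exact zero_ne_one hN
  have hfull : ∑ a ∈ range p, x ^ a = 0 := geom_zero hx hN
  have hsucc : p - 1 + 1 = p := Nat.succ_pred_eq_of_pos hp
  rw [← hsucc, Finset.sum_range_succ] at hfull
  have hxp : x ^ (p - 1) * x = 1 := by rw [← pow_succ, hsucc, hN]
  have : x ^ (p - 1) = x⁻¹ := by
    field_simp
    linear_combination hxp
  rw [this] at hfull
  linear_combination hfull

lemma sum_reindex {M : Type*} [AddCommMonoid M] (f : ℕ → M) (q : ℕ) :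
    ∀ N, ∑ t ∈ Finset.range (q * N), f t
      = ∑ a ∈ Finset.range N, ∑ b ∈ Finset.range q, f (q * a + b) := by
  intro N
  induction N with
  | zero => simp
  | succ N ih =>
      rw [Nat.mul_succ, Finset.sum_range_add, ih, Finset.sum_range_succ]

lemma abs_eq_one_of_pow {z : ℂ} {N : ℕ} (hN : 0 < N) (h : ‖z‖ ^ N = 1) :
    ‖z‖ = 1 := by
  rcases lt_trichotomy (‖z‖) 1 with h1 | h1 | h1
  · have := pow_lt_one₀ (norm_nonneg z) h1 hN.ne'
    simp [h] at this
  · exact h1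
  · have := one_lt_pow₀ h1 hN.ne'
    simp [h] at this

lemma key (p q m : ℕ) (hp2 : 2 ≤ p) (hpodd : Odd p) (hq : 0 < q) (hm : m = q * (p - 1))
    (ζ : Fin m → ℂ) (hinj : Function.Injective ζ)
    (h1 : ∀ i, ζ i ^ (p * q) = -1) (h2 : ∀ i, ζ i ^ q ≠ -1) :
    condNum (vand ζ) = (m : ℝ) * Real.sqrt (2 * (1 - 1 / (p : ℝ))) := by
  have hp0 : 0 < p := by omega
  have hpq0 : 0 < p * q := Nat.mul_pos hp0 hq
  have hz0 : ∀ i, ζ i ≠ 0 := by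
    intro i h
    have := h1 i
    rw [h, zero_pow hpq0.ne'] at this
    exact (by norm_num : (0:ℂ) ≠ -1) this
  -- the auxiliary p-th roots of unity
  set η : Fin m → ℂ := fun i => -((ζ i) ^ q)⁻¹ with hηdef
  have hη0 : ∀ i, η i ≠ 0 := by
    intro i h
    simp only [hηdef, neg_eq_zero, inv_eq_zero, pow_eq_zero_iff hq.ne'] at h
    exact hz0 i h
  have hηp : ∀ i, η i ^ p = 1 := by
    intro i
    have : (ζ i ^ q) ^ p = -1 := by
      rw [← pow_mul, mul_comm q p]; exact h1 i
    simp only [hηdef]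
    rw [hpodd.neg_pow, inv_pow, this]
    norm_num
  have hη1 : ∀ i, η i ≠ 1 := by
    intro i h
    simp only [hηdef, neg_eq_iff_eq_neg] at h
    apply h2 i
    rw [← inv_inv (ζ i ^ q), h]
    norm_num
  have hηinv1 : ∀ i, (η i)⁻¹ ≠ 1 := by
    intro i h
    exact hη1 i (by rw [← inv_inv (η i), h, inv_one])
  have hηinvp : ∀ i, ((η i)⁻¹) ^ p = 1 := by
    intro i; rw [inv_pow, hηp, inv_one]
  have hηz : ∀ i, (η i)⁻¹ = -(ζ i ^ q) := by
    intro i; simp only [hηdef]; rw [inv_neg, inv_inv]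
  -- absolute values
  have habs : ∀ i, ‖ζ i‖ = 1 := by
    intro i
    apply abs_eq_one_of_pow hpq0
    rw [← norm_pow, h1 i]
    simp
  have habsη : ∀ i, ‖η i‖ = 1 := by
    intro i
    apply abs_eq_one_of_pow hp0
    rw [← norm_pow, hηp i]
    simp
  have hD0 : ((q : ℂ) * p) ≠ 0 := by
    exact mul_ne_zero (Nat.cast_ne_zero.mpr hq.ne') (Nat.cast_ne_zero.mpr hp0.ne')
  -- the inverse matrix
  set W : Matrix (Fin m) (Fin m) ℂ :=
    Matrix.of (fun t i => (-1) ^ ((t : ℕ) / q) * ((ζ i)⁻¹) ^ ((t : ℕ) % q) *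
      ((η i) ^ ((t : ℕ) / q) - (η i)⁻¹) / ((q : ℂ) * p)) with hWdef
  -- key identity : V * W = 1
  have hVW : vand ζ * W = 1 := by
    ext i i'
    rw [Matrix.mul_apply, Matrix.one_apply]
    rw [show (∑ t : Fin m, vand ζ i t * W t i') =
        ∑ t ∈ range m, (fun t : ℕ => ζ i ^ t * ((-1) ^ (t / q) * ((ζ i')⁻¹) ^ (t % q) *
          ((η i') ^ (t / q) - (η i')⁻¹) / ((q : ℂ) * p))) t from
      Fin.sum_univ_eq_sum_range (fun t : ℕ => ζ i ^ t * ((-1) ^ (t / q) *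
        ((ζ i')⁻¹) ^ (t % q) * ((η i') ^ (t / q) - (η i')⁻¹) / ((q : ℂ) * p))) m]
    simp only []
    rw [show range m = range (q * (p - 1)) from by rw [hm], sum_reindex]
    have hstep : ∀ a ∈ range (p - 1), ∀ b ∈ range q,
        ζ i ^ (q * a + b) * ((-1) ^ ((q * a + b) / q) * ((ζ i')⁻¹) ^ ((q * a + b) % q) *
          ((η i') ^ ((q * a + b) / q) - (η i')⁻¹) / ((q : ℂ) * p)) =
        (((η i)⁻¹) ^ a * ((η i') ^ a - (η i')⁻¹)) * ((ζ i / ζ i') ^ b) / ((q : ℂ) * p) := by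
      intro a _ b hb
      rw [Finset.mem_range] at hb
      have hdiv : (q * a + b) / q = a := by
        rw [Nat.mul_add_div hq, Nat.div_eq_of_lt hb, add_zero]
      have hmod : (q * a + b) % q = b := by
        rw [Nat.mul_add_mod, Nat.mod_eq_of_lt hb]
      rw [hdiv, hmod, pow_add, pow_mul]
      have hkey : (ζ i ^ q) ^ a * (-1 : ℂ) ^ a = (((η i)⁻¹)) ^ a := by
        rw [← mul_pow, hηz i]; ring_nf
      have hb2 : (ζ i / ζ i') ^ b = ζ i ^ b * ((ζ i')⁻¹) ^ b := by
        rw [div_pow, inv_pow, div_eq_mul_inv]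
      rw [hb2, ← hkey]
      ring
    rw [Finset.sum_congr rfl (fun a ha => Finset.sum_congr rfl (fun b hb => hstep a ha b hb))]
    have hfact : ∑ a ∈ range (p - 1), ∑ b ∈ range q,
        (((η i)⁻¹) ^ a * ((η i') ^ a - (η i')⁻¹)) * ((ζ i / ζ i') ^ b) / ((q : ℂ) * p)
        = (∑ a ∈ range (p - 1), ((η i)⁻¹) ^ a * ((η i') ^ a - (η i')⁻¹)) *
          (∑ b ∈ range q, (ζ i / ζ i') ^ b) / ((q : ℂ) * p) := by
      rw [Finset.sum_mul_sum]
      rw [Finset.sum_div]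
      exact Finset.sum_congr rfl (fun a _ => by rw [Finset.sum_div])
    rw [hfact]
    by_cases hii : i = i'
    · subst hii
      rw [if_pos rfl]
      have hμ : ζ i / ζ i = 1 := div_self (hz0 i)
      rw [hμ]
      simp only [one_pow, Finset.sum_const, Finset.card_range, nsmul_eq_mul, mul_one]
      have hinner : ∑ a ∈ range (p - 1), ((η i)⁻¹) ^ a * ((η i) ^ a - (η i)⁻¹)
          = (p : ℂ) := by
        have hsplit : ∀ a ∈ range (p - 1), ((η i)⁻¹) ^ a * ((η i) ^ a - (η i)⁻¹)
            = 1 - (η i)⁻¹ * ((η i)⁻¹) ^ a := by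
          intro a _
          have ha1 : ((η i)⁻¹) ^ a * (η i) ^ a = 1 := by
            rw [← mul_pow, inv_mul_cancel₀ (hη0 i), one_pow]
          linear_combination ha1
        rw [Finset.sum_congr rfl hsplit, Finset.sum_sub_distrib, Finset.sum_const,
          Finset.card_range, ← Finset.mul_sum, geom_trunc hp0 (hηinv1 i) (hηinvp i)]
        rw [inv_inv, mul_neg, inv_mul_cancel₀ (hη0 i)]
        have hcast : ((p - 1 : ℕ) : ℂ) = (p : ℂ) - 1 := by
          push_cast [Nat.cast_sub (by omega : 1 ≤ p)]; ring
        rw [nsmul_eq_mul, hcast]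
        ring
      rw [hinner]
      field_simp
      have hp' : (p : ℂ) ≠ 0 := Nat.cast_ne_zero.mpr hp0.ne'
      have hq' : (q : ℂ) ≠ 0 := Nat.cast_ne_zero.mpr hq.ne'
      exact div_self (mul_ne_zero hp' hq')
    · rw [if_neg hii]
      have hμ1 : ζ i / ζ i' ≠ 1 := by
        intro h
        exact hii (hinj (div_eq_one_iff_eq (hz0 i')|>.mp h))
      set θ : ℂ := ((η i)⁻¹) * η i' with hθdef
      have hθμ : θ = (ζ i / ζ i') ^ q := by
        rw [hθdef, hηz i, hηdef]
        rw [div_pow]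
        field_simp
      have hθp : θ ^ p = 1 := by
        rw [hθμ, ← pow_mul, div_pow, mul_comm q p, h1 i, h1 i']
        norm_num
      by_cases hθ : θ = 1
      · have hsb : ∑ b ∈ range q, (ζ i / ζ i') ^ b = 0 :=
          geom_zero hμ1 (by rw [← hθμ, hθ])
        rw [hsb]
        simp
      · have hinner : ∑ a ∈ range (p - 1), ((η i)⁻¹) ^ a * ((η i') ^ a - (η i')⁻¹)
            = 0 := by
          have hsplit : ∀ a ∈ range (p - 1), ((η i)⁻¹) ^ a * ((η i') ^ a - (η i')⁻¹)
              = θ ^ a - (η i')⁻¹ * ((η i)⁻¹) ^ a := by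
            intro a _
            rw [hθdef, mul_pow]
            ring
          rw [Finset.sum_congr rfl hsplit, Finset.sum_sub_distrib, ← Finset.mul_sum,
            geom_trunc hp0 hθ hθp, geom_trunc hp0 (hηinv1 i) (hηinvp i)]
          rw [hθdef, inv_inv, mul_inv, inv_inv]
          ring
        rw [hinner]
        simp
  have hinvW : (vand ζ)⁻¹ = W := Matrix.inv_eq_right_inv hVW
  have hqR : (q : ℝ) ≠ 0 := Nat.cast_ne_zero.mpr hq.ne'
  have hpR : (p : ℝ) ≠ 0 := Nat.cast_ne_zero.mpr hp0.ne'
  -- Frobenius norm of V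
  have hfV : frobNorm (vand ζ) = (m : ℝ) := by
    unfold frobNorm
    have h11 : ∀ i j : Fin m, ‖vand ζ i j‖ ^ 2 = 1 := by
      intro i j
      rw [show vand ζ i j = ζ i ^ (j : ℕ) from rfl, norm_pow, habs i]
      simp
    have hrow : ∀ i : Fin m, (∑ j : Fin m, ‖vand ζ i j‖ ^ 2) = (m : ℝ) := by
      intro i
      rw [Finset.sum_congr rfl (fun j _ => h11 i j)]
      simp
    rw [Finset.sum_congr rfl (fun i _ => hrow i), Finset.sum_const, Finset.card_univ,
      Fintype.card_fin, nsmul_eq_mul, Real.sqrt_mul_self (Nat.cast_nonneg m)]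
  -- entries of W in absolute value
  have habsW : ∀ t i : Fin m, ‖W t i‖ ^ 2
      = Complex.normSq (η i ^ ((t : ℕ) / q) - (η i)⁻¹) / ((q : ℝ) * p) ^ 2 := by
    intro t i
    have hW : ‖W t i‖
        = ‖η i ^ ((t : ℕ) / q) - (η i)⁻¹‖ / ((q : ℝ) * p) := by
      rw [show W t i = (-1) ^ ((t : ℕ) / q) * ((ζ i)⁻¹) ^ ((t : ℕ) % q) *
        ((η i) ^ ((t : ℕ) / q) - (η i)⁻¹) / ((q : ℂ) * p) from rfl]
      rw [norm_div, norm_mul, norm_mul, norm_pow, norm_pow, norm_inv,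
        habs i, norm_mul]
      simp
    rw [hW, div_pow, Complex.sq_norm]
  -- column sums of |W|^2
  have hWcol : ∀ i : Fin m, (∑ t : Fin m, ‖W t i‖ ^ 2)
      = 2 / ((q : ℝ) * p) := by
    intro i
    have hcast : ((p - 1 : ℕ) : ℂ) = (p : ℂ) - 1 := by
      push_cast [Nat.cast_sub (by omega : 1 ≤ p)]; ring
    -- the complex computation of the sum of normSq
    have hS : ∑ a ∈ range (p - 1), (Complex.normSq (η i ^ a - (η i)⁻¹) : ℂ)
        = 2 * p := by
      have hconj : (starRingEnd ℂ) (η i) = (η i)⁻¹ :=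
        (Complex.inv_eq_conj (habsη i)).symm
      have hterm : ∀ a ∈ range (p - 1), (Complex.normSq (η i ^ a - (η i)⁻¹) : ℂ)
          = 2 - η i * η i ^ a - (η i)⁻¹ * ((η i)⁻¹) ^ a := by
        intro a _
        rw [← Complex.mul_conj, map_sub, map_pow, map_inv₀, hconj, inv_inv]
        have ha1 : η i ^ a * ((η i)⁻¹) ^ a = 1 := by
          rw [← mul_pow, mul_inv_cancel₀ (hη0 i), one_pow]
        have ha2 : (η i)⁻¹ * η i = 1 := inv_mul_cancel₀ (hη0 i)
        linear_combination ha1 + ha2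
      rw [Finset.sum_congr rfl hterm, Finset.sum_sub_distrib, Finset.sum_sub_distrib,
        Finset.sum_const, Finset.card_range, ← Finset.mul_sum, ← Finset.mul_sum,
        geom_trunc hp0 (hη1 i) (hηp i), geom_trunc hp0 (hηinv1 i) (hηinvp i), inv_inv]
      rw [mul_neg, mul_neg, mul_inv_cancel₀ (hη0 i), inv_mul_cancel₀ (hη0 i),
        nsmul_eq_mul, hcast]
      ring
    have hSreal : ∑ a ∈ range (p - 1), Complex.normSq (η i ^ a - (η i)⁻¹)
        = 2 * (p : ℝ) := by
      exact_mod_cast hS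
    rw [Finset.sum_congr rfl (fun t (_ : t ∈ Finset.univ) => habsW t i)]
    rw [show (∑ t : Fin m, Complex.normSq (η i ^ ((t : ℕ) / q) - (η i)⁻¹) / ((q : ℝ) * p) ^ 2)
        = ∑ t ∈ range m, (fun t : ℕ =>
            Complex.normSq (η i ^ (t / q) - (η i)⁻¹) / ((q : ℝ) * p) ^ 2) t from
      Fin.sum_univ_eq_sum_range (fun t : ℕ =>
        Complex.normSq (η i ^ (t / q) - (η i)⁻¹) / ((q : ℝ) * p) ^ 2) m]
    simp only []
    rw [show range m = range (q * (p - 1)) from by rw [hm], sum_reindex]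
    have hstep2 : ∀ a ∈ range (p - 1), ∑ b ∈ range q,
        Complex.normSq (η i ^ ((q * a + b) / q) - (η i)⁻¹) / ((q : ℝ) * p) ^ 2
        = (q : ℝ) * (Complex.normSq (η i ^ a - (η i)⁻¹) / ((q : ℝ) * p) ^ 2) := by
      intro a _
      have hb : ∀ b ∈ range q,
          Complex.normSq (η i ^ ((q * a + b) / q) - (η i)⁻¹) / ((q : ℝ) * p) ^ 2
          = Complex.normSq (η i ^ a - (η i)⁻¹) / ((q : ℝ) * p) ^ 2 := by
        intro b hb
        rw [Finset.mem_range] at hb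
        rw [Nat.mul_add_div hq, Nat.div_eq_of_lt hb, add_zero]
      rw [Finset.sum_congr rfl hb, Finset.sum_const, Finset.card_range, nsmul_eq_mul]
    rw [Finset.sum_congr rfl hstep2, ← Finset.mul_sum, ← Finset.sum_div, hSreal]
    field_simp
  -- Frobenius norm of W
  have hfW : frobNorm W = Real.sqrt (2 * (1 - 1 / (p : ℝ))) := by
    unfold frobNorm
    rw [Finset.sum_comm]
    rw [Finset.sum_congr rfl (fun i (_ : i ∈ Finset.univ) => hWcol i)]
    rw [Finset.sum_const, Finset.card_univ, Fintype.card_fin, nsmul_eq_mul]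
    congr 1
    rw [hm]
    push_cast [Nat.cast_sub (by omega : 1 ≤ p)]
    field_simp
  unfold condNum
  rw [hinvW, hfV, hfW]


/-- If `n = 2 ^ k * p ^ ℓ` with `p` an odd prime and `k, ℓ ≥ 1`,
then `Cond(V_n) = φ(n) * √(2 * (1 - 1/p))`. -/
theorem cond_vand_two_pow_mul_prime_pow (p k l : ℕ) (hp : p.Prime) (hpodd : Odd p)
    (hk : 0 < k) (hl : 0 < l)
    (ζ : Fin (2 ^ k * p ^ l).totient → ℂ) (hζinj : Function.Injective ζ)
    (hζ : ∀ i, IsPrimitiveRoot (ζ i) (2 ^ k * p ^ l)) :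
    condNum (vand ζ) =
      ((2 ^ k * p ^ l).totient : ℝ) * Real.sqrt (2 * (1 - 1 / (p : ℝ))) := by
  have hp2 : 2 ≤ p := hp.two_le
  have hpne2 : p ≠ 2 := by
    rintro rfl
    exact (by norm_num : ¬ Odd 2) hpodd
  set q := 2 ^ (k - 1) * p ^ (l - 1) with hqdef
  have hq : 0 < q := Nat.mul_pos (Nat.pow_pos (by norm_num))
    (Nat.pow_pos (by omega))
  have hn2 : 2 ^ k * p ^ l = 2 * (p * q) := by
    have hk' : k - 1 + 1 = k := Nat.succ_pred_eq_of_pos hk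
    have hl' : l - 1 + 1 = l := Nat.succ_pred_eq_of_pos hl
    calc 2 ^ k * p ^ l = 2 ^ (k - 1 + 1) * p ^ (l - 1 + 1) := by rw [hk', hl']
      _ = 2 * (p * q) := by rw [pow_succ, pow_succ, hqdef]; ring
  have hm : (2 ^ k * p ^ l).totient = q * (p - 1) := by
    have hcop : Nat.Coprime (2 ^ k) (p ^ l) :=
      Nat.Coprime.pow _ _ ((Nat.coprime_primes Nat.prime_two hp).mpr (Ne.symm hpne2))
    rw [Nat.totient_mul hcop, Nat.totient_prime_pow Nat.prime_two hk,
      Nat.totient_prime_pow hp hl, hqdef]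
    ring_nf
  have hP : 0 < p * q := Nat.mul_pos hp.pos hq
  have h1 : ∀ i, ζ i ^ (p * q) = -1 := by
    intro i
    have hz := hζ i
    have hsq : (ζ i ^ (p * q)) ^ 2 = 1 := by
      rw [← pow_mul, show p * q * 2 = 2 ^ k * p ^ l from by rw [hn2]; ring,
        hz.pow_eq_one]
    have hne : ζ i ^ (p * q) ≠ 1 :=
      hz.pow_ne_one_of_pos_of_lt hP.ne' (by rw [hn2]; linarith)
    rcases mul_eq_zero.mp (show (ζ i ^ (p * q) - 1) * (ζ i ^ (p * q) + 1) = 0 from by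
        linear_combination hsq) with h | h
    · exact absurd (by linear_combination h) hne
    · linear_combination h
  have h2 : ∀ i, ζ i ^ q ≠ -1 := by
    intro i h
    have hz := hζ i
    have hone : ζ i ^ (2 * q) = 1 := by rw [mul_comm, pow_mul, h]; norm_num
    have hqP : q < p * q := by
      calc q = 1 * q := (one_mul q).symm
        _ < p * q := by
            exact Nat.mul_lt_mul_of_lt_of_le (by omega) (le_refl q) hq
    have hlt : 2 * q < 2 ^ k * p ^ l := by rw [hn2]; omega
    exact hz.pow_ne_one_of_pos_of_lt (by omega) hlt hone
  exact key p q _ hp2 hpodd hq hm ζ hζinj h1 h2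
end

section
/- For every positive integer n, every entry of the matrix n·G_n^{−1} is a (rational) integer; that is, for all indices i, j, the complex number n·(G_n^{−1})_{i,j} lies in the image of ℤ in ℂ. -/
open Matrix Polynomial BigOperators

namespace AuxGram

noncomputable section

open Finset

/-- `pK ζ k = ∏_{l ≠ k} (X - ζ l)`. -/
def pK {m : ℕ} (ζ : Fin m → ℂ) (k : Fin m) : Polynomial ℂ :=
  ∏ l ∈ Finset.univ.erase k, (X - C (ζ l))

/-- Candidate inverse of the Vandermonde matrix. -/
def Wmat {m : ℕ} (ζ : Fin m → ℂ) : Matrix (Fin m) (Fin m) ℂ :=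
  Matrix.of fun i k => (pK ζ k).coeff i / (pK ζ k).eval (ζ k)

/-- `g = ∏_{d | n, d < n} Φ_d`, so that `Φ_n * g = X^n - 1`. -/
def gI (n : ℕ) : Polynomial ℤ :=
  ∏ d ∈ n.properDivisors, cyclotomic d ℤ

/-- Integer polynomials giving the coefficients of `Φ_n(X)/(X - ζ)` as
polynomials in `ζ`. -/
def EI (n : ℕ) (a : ℕ) : Polynomial ℤ :=
  ∑ t ∈ Finset.Ico (a + 1) (n.totient + 1),
    C ((cyclotomic n ℤ).coeff t) * X ^ (t - 1 - a)

variable {m : ℕ} (ζ : Fin m → ℂ)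

lemma monic_pK (k : Fin m) : (pK ζ k).Monic :=
  monic_prod_of_monic _ _ fun _ _ => monic_X_sub_C _

lemma natDegree_pK (k : Fin m) : (pK ζ k).natDegree = m - 1 := by
  rw [pK, natDegree_prod _ _ fun l _ => X_sub_C_ne_zero (ζ l)]
  simp [Finset.card_erase_of_mem]

lemma eval_pK_ne {l k : Fin m} (h : l ≠ k) : (pK ζ k).eval (ζ l) = 0 := by
  rw [pK, eval_prod]
  exact Finset.prod_eq_zero (Finset.mem_erase.2 ⟨h, Finset.mem_univ l⟩) (by simp)

lemma eval_pK_self_ne_zero (hinj : Function.Injective ζ) (k : Fin m) :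
    (pK ζ k).eval (ζ k) ≠ 0 := by
  rw [pK, eval_prod]
  refine Finset.prod_ne_zero_iff.2 fun l hl => ?_
  have hlk : l ≠ k := (Finset.mem_erase.1 hl).1
  simpa [sub_eq_zero] using fun h => hlk (hinj h.symm)

lemma vand_mul_Wmat (hinj : Function.Injective ζ) : vand ζ * Wmat ζ = 1 := by
  ext k l
  have hm : (pK ζ l).natDegree < m := by
    have h := natDegree_pK ζ l
    have h0 : 0 < m := l.pos
    omega
  have hP := eval_pK_self_ne_zero ζ hinj l
  have hsum : ∀ x : ℂ,
      (∑ i : Fin m, x ^ (i : ℕ) * ((pK ζ l).coeff i / (pK ζ l).eval (ζ l)))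
        = (pK ζ l).eval x / (pK ζ l).eval (ζ l) := by
    intro x
    rw [eval_eq_sum_range' hm x, Finset.sum_div,
      ← Fin.sum_univ_eq_sum_range
        (fun i => (pK ζ l).coeff i * x ^ i / (pK ζ l).eval (ζ l)) m]
    exact Finset.sum_congr rfl fun i _ => by ring
  rw [Matrix.mul_apply]
  simp only [vand, Wmat, Matrix.of_apply]
  rw [hsum (ζ k)]
  rcases eq_or_ne k l with rfl | hkl
  · rw [div_self hP, Matrix.one_apply_eq]
  · rw [eval_pK_ne ζ hkl, zero_div, Matrix.one_apply_ne hkl]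

section Main

variable {n : ℕ} {ζ : Fin n.totient → ℂ}

lemma prim_image (hn : 0 < n) (hζinj : Function.Injective ζ)
    (hζ : ∀ i, IsPrimitiveRoot (ζ i) n) :
    Finset.image ζ Finset.univ = primitiveRoots n ℂ := by
  apply Finset.eq_of_subset_of_card_le
  · intro x hx
    simp only [Finset.mem_image] at hx
    obtain ⟨i, -, rfl⟩ := hx
    exact (mem_primitiveRoots hn).2 (hζ i)
  · rw [Complex.card_primitiveRoots, Finset.card_image_of_injective _ hζinj,
      Finset.card_univ, Fintype.card_fin]

lemma phi_fact (hn : 0 < n) (hζinj : Function.Injective ζ)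
    (hζ : ∀ i, IsPrimitiveRoot (ζ i) n) (k : Fin n.totient) :
    (X - C (ζ k)) * pK ζ k = cyclotomic n ℂ := by
  rw [cyclotomic_eq_prod_X_sub_primitiveRoots (hζ k), ← prim_image hn hζinj hζ,
    Finset.prod_image fun a _ b _ h => hζinj h, pK,
    ← Finset.mul_prod_erase _ _ (Finset.mem_univ k)]

lemma deriv_phi (hn : 0 < n) (hζinj : Function.Injective ζ)
    (hζ : ∀ i, IsPrimitiveRoot (ζ i) n) (k : Fin n.totient) :
    eval (ζ k) (derivative (cyclotomic n ℂ)) = eval (ζ k) (pK ζ k) := by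
  rw [← phi_fact hn hζinj hζ k, derivative_mul]
  simp

lemma phi_g_fact (hn : 0 < n) :
    cyclotomic n ℂ * map (Int.castRingHom ℂ) (gI n) = X ^ n - 1 := by
  have h := prod_cyclotomic_eq_X_pow_sub_one hn ℤ
  rw [← Nat.cons_self_properDivisors hn.ne', Finset.prod_cons] at h
  have h2 := congrArg (map (Int.castRingHom ℂ)) h
  simpa [gI, Polynomial.map_mul, Polynomial.map_sub, Polynomial.map_pow,
    map_cyclotomic_int] using h2

lemma key_ident (hn : 0 < n) {w : ℂ} (hw : IsPrimitiveRoot w n) :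
    eval w (derivative (cyclotomic n ℂ)) *
      (w * eval w (map (Int.castRingHom ℂ) (gI n))) = n := by
  have hder := congrArg derivative (phi_g_fact hn)
  rw [derivative_mul, derivative_sub, derivative_X_pow, derivative_one, sub_zero] at hder
  have heval := congrArg (eval w) hder
  rw [eval_add, eval_mul, eval_mul, eval_mul, eval_pow, eval_C, eval_X,
    (hw.isRoot_cyclotomic hn).eq_zero, zero_mul, add_zero] at heval
  calc eval w (derivative (cyclotomic n ℂ)) *
      (w * eval w (map (Int.castRingHom ℂ) (gI n)))
      = (eval w (derivative (cyclotomic n ℂ)) *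
          eval w (map (Int.castRingHom ℂ) (gI n))) * w := by ring
    _ = (n : ℂ) * w ^ (n - 1) * w := by rw [heval]
    _ = (n : ℂ) * w ^ (n - 1 + 1) := by ring
    _ = n := by rw [Nat.sub_add_cancel hn, hw.pow_eq_one, mul_one]

lemma conj_eval (P : Polynomial ℤ) (z : ℂ) :
    (starRingEnd ℂ) (eval z (map (Int.castRingHom ℂ) P)) =
      eval ((starRingEnd ℂ) z) (map (Int.castRingHom ℂ) P) := by
  rw [← eval₂_hom, eval₂_eq_eval_map, Polynomial.map_map]
  congr 2
  exact RingHom.ext_int _ _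

lemma conj_prim_root (hn : 0 < n) {w : ℂ} (hw : IsPrimitiveRoot w n) :
    (starRingEnd ℂ) w = w ^ (n - 1) := by
  have h1 : w ^ n = 1 := hw.pow_eq_one
  have hz : w ≠ 0 := fun h => by simp [h, zero_pow hn.ne'] at h1
  have hnorm : ‖w‖ = 1 := Complex.norm_eq_one_of_pow_eq_one h1 hn.ne'
  have hc : w * (starRingEnd ℂ) w = 1 := by
    rw [Complex.mul_conj]
    norm_cast
    rw [Complex.normSq_eq_norm_sq, hnorm, one_pow]
  have h2 : w * w ^ (n - 1) = 1 := by
    rw [← pow_succ', Nat.sub_add_cancel hn, h1]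
  exact mul_left_cancel₀ hz (hc.trans h2.symm)

lemma coeff_pK_eq (hn : 0 < n) (hζinj : Function.Injective ζ)
    (hζ : ∀ i, IsPrimitiveRoot (ζ i) n) (k : Fin n.totient) (a : ℕ) :
    (pK ζ k).coeff a = eval (ζ k) (map (Int.castRingHom ℂ) (EI n a)) := by
  set z := ζ k with hz
  set Φ : Polynomial ℂ := cyclotomic n ℂ with hΦ
  have hdeg : Φ.natDegree = n.totient := natDegree_cyclotomic n ℂ
  set e : ℕ → ℂ := fun a =>
    ∑ t ∈ Finset.Ico (a + 1) (n.totient + 1), Φ.coeff t * z ^ (t - 1 - a) with he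
  have hEI : ∀ a, eval z (map (Int.castRingHom ℂ) (EI n a)) = e a := by
    intro a
    rw [EI, Polynomial.map_sum, eval_finset_sum]
    refine Finset.sum_congr rfl fun t _ => ?_
    rw [Polynomial.map_mul, Polynomial.map_C, Polynomial.map_pow, Polynomial.map_X,
      eval_mul, eval_C, eval_pow, eval_X]
    congr 1
    rw [hΦ, ← map_cyclotomic_int n ℂ, coeff_map]
  have etop : ∀ a, n.totient ≤ a → e a = 0 := by
    intro a ha
    rw [he]
    simp only []
    rw [Finset.Ico_eq_empty (by omega), Finset.sum_empty]
  have heval0 : eval z Φ = 0 := ((hζ k).isRoot_cyclotomic hn).eq_zero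
  have hsum0 : Φ.coeff 0 * z ^ 0 +
      ∑ t ∈ Finset.Ico 1 (n.totient + 1), Φ.coeff t * z ^ t = 0 := by
    have h1 := eval_eq_sum_range' (p := Φ) (by rw [hdeg]; omega : Φ.natDegree < n.totient + 1) z
    rw [Finset.range_eq_Ico,
      Finset.sum_eq_sum_Ico_succ_bot (by omega : 0 < n.totient + 1)
        (fun t => Φ.coeff t * z ^ t), heval0] at h1
    exact h1.symm
  have e0 : -(z * e 0) = Φ.coeff 0 := by
    have hze : z * e 0 = ∑ t ∈ Finset.Ico 1 (n.totient + 1), Φ.coeff t * z ^ t := by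
      rw [he, Finset.mul_sum]
      refine Finset.sum_congr rfl fun t ht => ?_
      have ht' := Finset.mem_Ico.1 ht
      obtain ⟨s, rfl⟩ : ∃ s, t = s + 1 := ⟨t - 1, by omega⟩
      rw [show s + 1 - 1 - 0 = s by omega, pow_succ]
      ring
    rw [hze]
    rw [pow_zero, mul_one] at hsum0
    linear_combination -hsum0
  have ediff : ∀ a, e a - e (a + 1) * z = Φ.coeff (a + 1) := by
    intro a
    by_cases hma : a + 1 ≤ n.totient
    · have hsplit : e a = Φ.coeff (a + 1) * z ^ (a + 1 - 1 - a) +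
          ∑ t ∈ Finset.Ico (a + 2) (n.totient + 1), Φ.coeff t * z ^ (t - 1 - a) := by
        rw [he]
        exact Finset.sum_eq_sum_Ico_succ_bot (by omega) _
      have hmul : e (a + 1) * z = ∑ t ∈ Finset.Ico (a + 2) (n.totient + 1),
          Φ.coeff t * z ^ (t - 1 - a) := by
        rw [he, Finset.sum_mul]
        refine Finset.sum_congr rfl fun t ht => ?_
        have ht' := Finset.mem_Ico.1 ht
        obtain ⟨s, rfl⟩ : ∃ s, t = s + a + 2 := ⟨t - a - 2, by omega⟩
        rw [show s + a + 2 - 1 - a = s + 1 by omega,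
          show s + a + 2 - 1 - (a + 1) = s by omega, pow_succ]
        ring
      rw [hsplit, hmul]
      rw [show a + 1 - 1 - a = 0 by omega, pow_zero, mul_one]
      ring
    · rw [etop a (by omega), etop (a + 1) (by omega),
        coeff_eq_zero_of_natDegree_lt (by rw [hdeg]; omega)]
      ring
  set Q : Polynomial ℂ := ∑ a ∈ Finset.range n.totient, C (e a) * X ^ a with hQ
  have hQcoeff : ∀ j, Q.coeff j = e j := by
    intro j
    rw [hQ, finset_sum_coeff]
    simp only [coeff_C_mul, coeff_X_pow, mul_ite, mul_one, mul_zero]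
    rw [Finset.sum_ite_eq]
    by_cases hj : j < n.totient
    · simp [hj]
    · simp [hj, etop j (by omega)]
  have hfac : (X - C z) * Q = Φ := by
    rw [mul_comm]
    ext c
    rcases c with _ | a
    · rw [mul_coeff_zero, hQcoeff]
      have h0 : (X - C z).coeff 0 = -z := by simp
      rw [h0]
      linear_combination e0
    · rw [coeff_mul_X_sub_C, hQcoeff, hQcoeff, ediff]
  have hpk : pK ζ k = Q :=
    mul_left_cancel₀ (X_sub_C_ne_zero z) ((phi_fact hn hζinj hζ k).trans hfac.symm)
  rw [hpk, hQcoeff, hEI]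

lemma sum_pow_div_eval (hn : 0 < n) (hζinj : Function.Injective ζ)
    (hζ : ∀ i, IsPrimitiveRoot (ζ i) n) {j : ℕ} (hj : j < n.totient) :
    (∑ k, (ζ k) ^ j / eval (ζ k) (pK ζ k)) =
      if j = n.totient - 1 then 1 else 0 := by
  have hWV : Wmat ζ * vand ζ = 1 := mul_eq_one_comm.1 (vand_mul_Wmat ζ hζinj)
  have hm : 0 < n.totient := Nat.totient_pos.2 hn
  have h := congrFun (congrFun hWV ⟨n.totient - 1, by omega⟩) ⟨j, hj⟩
  rw [Matrix.mul_apply] at h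
  have hcoeff : ∀ k : Fin n.totient,
      (pK ζ k).coeff (n.totient - 1) = 1 := by
    intro k
    have := (monic_pK ζ k).coeff_natDegree
    rwa [natDegree_pK ζ k] at this
  have hterm : ∀ k : Fin n.totient,
      Wmat ζ ⟨n.totient - 1, by omega⟩ k * vand ζ k ⟨j, hj⟩
        = (ζ k) ^ j / eval (ζ k) (pK ζ k) := by
    intro k
    simp only [Wmat, vand, Matrix.of_apply]
    rw [hcoeff k]
    ring
  rw [Finset.sum_congr rfl fun k _ => hterm k] at h
  rw [h, Matrix.one_apply]
  simp only [Fin.mk.injEq]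
  by_cases hje : j = n.totient - 1 <;> simp [hje, eq_comm]

lemma trace_lemma (hn : 0 < n) (hζinj : Function.Injective ζ)
    (hζ : ∀ i, IsPrimitiveRoot (ζ i) n) (h : Polynomial ℤ) :
    (∑ k, eval (ζ k) (map (Int.castRingHom ℂ) h) / eval (ζ k) (pK ζ k))
      = (((h %ₘ cyclotomic n ℤ).coeff (n.totient - 1) : ℤ) : ℂ) := by
  have hm : 0 < n.totient := Nat.totient_pos.2 hn
  set r : Polynomial ℤ := h %ₘ cyclotomic n ℤ with hr
  have hmon := cyclotomic.monic n ℤ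
  have heq : ∀ k : Fin n.totient,
      eval (ζ k) (map (Int.castRingHom ℂ) h) = eval (ζ k) (map (Int.castRingHom ℂ) r) := by
    intro k
    have hd := modByMonic_add_div h (cyclotomic n ℤ)
    have := congrArg (eval (ζ k) ∘ map (Int.castRingHom ℂ)) hd
    simp only [Function.comp_apply, Polynomial.map_add, Polynomial.map_mul, eval_add,
      eval_mul, map_cyclotomic_int, ((hζ k).isRoot_cyclotomic hn).eq_zero, zero_mul,
      add_zero] at this
    exact this.symm
  rcases eq_or_ne r 0 with hr0 | hr0
  · simp [heq, hr0]
  have hdeg : r.natDegree < n.totient := by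
    have h1 : r.degree < (cyclotomic n ℤ).degree := degree_modByMonic_lt h hmon
    have h2 := natDegree_lt_natDegree hr0 h1
    rwa [natDegree_cyclotomic] at h2
  have hdegC : (map (Int.castRingHom ℂ) r).natDegree < n.totient :=
    lt_of_le_of_lt natDegree_map_le hdeg
  calc (∑ k, eval (ζ k) (map (Int.castRingHom ℂ) h) / eval (ζ k) (pK ζ k))
      = ∑ k, (∑ t ∈ Finset.range n.totient,
          (map (Int.castRingHom ℂ) r).coeff t * (ζ k) ^ t) / eval (ζ k) (pK ζ k) := by
        refine Finset.sum_congr rfl fun k _ => ?_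
        rw [heq k, eval_eq_sum_range' hdegC]
    _ = ∑ t ∈ Finset.range n.totient, (map (Int.castRingHom ℂ) r).coeff t *
          ∑ k, (ζ k) ^ t / eval (ζ k) (pK ζ k) := by
        rw [Finset.sum_congr rfl fun k (_ : k ∈ Finset.univ) => Finset.sum_div _ _ _,
          Finset.sum_comm]
        refine Finset.sum_congr rfl fun t _ => ?_
        rw [Finset.mul_sum]
        refine Finset.sum_congr rfl fun k _ => ?_
        ring
    _ = (((r.coeff (n.totient - 1) : ℤ)) : ℂ) := by
        rw [Finset.sum_congr rfl fun t ht =>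
          by rw [sum_pow_div_eval hn hζinj hζ (Finset.mem_range.1 ht)]]
        simp only [mul_ite, mul_one, mul_zero]
        rw [Finset.sum_ite_eq' (Finset.range n.totient) (n.totient - 1)
          (fun t => (map (Int.castRingHom ℂ) r).coeff t)]
        rw [if_pos (Finset.mem_range.2 (by omega)), coeff_map]
        rfl

end Main

end

end AuxGram

/-- For every positive integer `n`, every entry of `n • (G_n)⁻¹`
is a rational integer, where `G_n = V_nᴴ * V_n`. -/
theorem nsmul_inv_gram_int_entries (n : ℕ) (hn : 0 < n)
    (ζ : Fin n.totient → ℂ) (hζinj : Function.Injective ζ)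
    (hζ : ∀ i, IsPrimitiveRoot (ζ i) n)
    (i j : Fin n.totient) :
    ∃ z : ℤ, (n : ℂ) * ((vand ζ)ᴴ * vand ζ)⁻¹ i j = (z : ℂ) := by
  classical
  open AuxGram in
  have hnC : (n : ℂ) ≠ 0 := Nat.cast_ne_zero.2 hn.ne'
  have hV : vand ζ * AuxGram.Wmat ζ = 1 := AuxGram.vand_mul_Wmat ζ hζinj
  have hVinv : (vand ζ)⁻¹ = AuxGram.Wmat ζ := Matrix.inv_eq_right_inv hV
  have hG : ((vand ζ)ᴴ * vand ζ)⁻¹ = AuxGram.Wmat ζ * (AuxGram.Wmat ζ)ᴴ := by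
    rw [Matrix.mul_inv_rev, hVinv, ← Matrix.conjTranspose_nonsing_inv, hVinv]
  set hpoly : Polynomial ℤ := AuxGram.EI n i * ((AuxGram.EI n j).comp (X ^ (n - 1)) *
    (X ^ (n - 1) * (AuxGram.gI n).comp (X ^ (n - 1)))) with hh
  refine ⟨(hpoly %ₘ cyclotomic n ℤ).coeff (n.totient - 1), ?_⟩
  rw [hG, Matrix.mul_apply, Finset.mul_sum,
    ← AuxGram.trace_lemma hn hζinj hζ hpoly]
  refine Finset.sum_congr rfl fun k _ => ?_
  have hP : eval (ζ k) (AuxGram.pK ζ k) ≠ 0 := AuxGram.eval_pK_self_ne_zero ζ hζinj k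
  have hprim := hζ k
  have hcop : Nat.Coprime (n - 1) n := by
    have h1 : n - 1 + 1 = n := Nat.succ_pred_eq_of_pos hn
    rw [← h1]; simp
  have hzb : IsPrimitiveRoot (ζ k ^ (n - 1)) n := hprim.pow_of_coprime (n - 1) hcop
  have hconjz : (starRingEnd ℂ) (ζ k) = ζ k ^ (n - 1) :=
    AuxGram.conj_prim_root hn hprim
  have hPd : eval (ζ k) (derivative (cyclotomic n ℂ)) = eval (ζ k) (AuxGram.pK ζ k) :=
    AuxGram.deriv_phi hn hζinj hζ k
  have hderiv_map : derivative (cyclotomic n ℂ)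
      = map (Int.castRingHom ℂ) (derivative (cyclotomic n ℤ)) := by
    rw [← map_cyclotomic_int n ℂ, derivative_map]
  have hconjP : (starRingEnd ℂ) (eval (ζ k) (AuxGram.pK ζ k))
      = eval (ζ k ^ (n - 1)) (derivative (cyclotomic n ℂ)) := by
    rw [← hPd, hderiv_map, AuxGram.conj_eval, hconjz]
  have hkey := AuxGram.key_ident hn hzb
  have hW1 : AuxGram.Wmat ζ i k
      = eval (ζ k) (map (Int.castRingHom ℂ) (AuxGram.EI n i)) /
        eval (ζ k) (AuxGram.pK ζ k) := by
    simp only [AuxGram.Wmat, Matrix.of_apply]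
    rw [AuxGram.coeff_pK_eq hn hζinj hζ k i]
  have hW2 : (AuxGram.Wmat ζ)ᴴ k j
      = eval (ζ k ^ (n - 1)) (map (Int.castRingHom ℂ) (AuxGram.EI n j)) /
        eval (ζ k ^ (n - 1)) (derivative (cyclotomic n ℂ)) := by
    rw [Matrix.conjTranspose_apply]
    have hWjk : AuxGram.Wmat ζ j k
        = eval (ζ k) (map (Int.castRingHom ℂ) (AuxGram.EI n j)) /
          eval (ζ k) (AuxGram.pK ζ k) := by
      simp only [AuxGram.Wmat, Matrix.of_apply]
      rw [AuxGram.coeff_pK_eq hn hζinj hζ k j]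
    rw [hWjk, Complex.star_def, map_div₀, AuxGram.conj_eval, hconjz, hconjP]
  have hD : eval (ζ k ^ (n - 1)) (derivative (cyclotomic n ℂ)) ≠ 0 := by
    intro h0
    rw [h0, zero_mul] at hkey
    exact hnC hkey.symm
  have hEv : eval (ζ k) (map (Int.castRingHom ℂ) hpoly)
      = eval (ζ k) (map (Int.castRingHom ℂ) (AuxGram.EI n i)) *
        (eval (ζ k ^ (n - 1)) (map (Int.castRingHom ℂ) (AuxGram.EI n j)) *
          (ζ k ^ (n - 1) *
            eval (ζ k ^ (n - 1)) (map (Int.castRingHom ℂ) (AuxGram.gI n)))) := by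
    rw [hh]
    simp only [Polynomial.map_mul, Polynomial.map_comp, Polynomial.map_pow,
      Polynomial.map_X, eval_mul, eval_comp, eval_pow, eval_X]
  have hY : ζ k ^ (n - 1) *
      eval (ζ k ^ (n - 1)) (map (Int.castRingHom ℂ) (AuxGram.gI n))
        = (n : ℂ) / eval (ζ k ^ (n - 1)) (derivative (cyclotomic n ℂ)) := by
    rw [eq_div_iff hD]
    linear_combination hkey
  rw [hW1, hW2, hEv, hY]
  ring
end

section
/- For every positive integer n with n′ := rad(n), m := φ(n), m′ := φ(n′), and h := n/n′, and re-indexing rows and columns of G_n by {0,…,m−1} (so that G_n has (i,j) entry c_n(i−j)), one has, writing i = h·i′ + i″ and j = h·j′ + j″ with 0 ≤ i′, j′ < m′ and 0 ≤ i″, j″ < h: the (i,j) entry of G_n equals h·c_{n′}(i′ − j′) if i″ = j″ and equals 0 otherwise; equivalently, G_n = h·(G_{n′} ⊗ Id_h), the Kronecker product of h·G_{n′} with the h×h identity matrix. -/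
open Matrix Polynomial BigOperators

/- Auxiliary lemmas -/


open ArithmeticFunction in
lemma ram_formula (t : ℤ) {m : ℕ} (hm : 0 < m) :
    ram m t = ∑ d ∈ m.divisors, (moebius (m / d) : ℂ) * (if (d : ℤ) ∣ t then (d : ℂ) else 0) := by
  have key : ∀ k > 0, ∑ d ∈ Nat.divisors k, ram d t
      = (if (k : ℤ) ∣ t then (k : ℂ) else 0) := by
    intro k hk
    obtain ⟨ζ₀, h₀⟩ : ∃ z : ℂ, IsPrimitiveRoot z k := ⟨_, Complex.isPrimitiveRoot_exp k hk.ne'⟩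
    have : NeZero k := ⟨hk.ne'⟩
    -- sum over divisors = sum over all k-th roots of unity
    have h1 : ∑ d ∈ Nat.divisors k, ram d t = ∑ z ∈ nthRootsFinset k (1 : ℂ), z ^ t := by
      rw [IsPrimitiveRoot.nthRoots_one_eq_biUnion_primitiveRoots, Finset.sum_biUnion
        (fun a _ b _ hab => IsPrimitiveRoot.disjoint hab)]
      rfl
    -- roots of unity enumerated by powers of ζ₀
    have h2 : nthRootsFinset k (1 : ℂ) = (Finset.range k).image (ζ₀ ^ ·) := by
      apply Finset.Subset.antisymm
      · intro x hx
        obtain ⟨i, hi, rfl⟩ := h₀.eq_pow_of_pow_eq_one ((mem_nthRootsFinset hk 1).mp hx)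
        exact Finset.mem_image.mpr ⟨i, Finset.mem_range.mpr hi, rfl⟩
      · intro x hx
        obtain ⟨i, _, rfl⟩ := Finset.mem_image.mp hx
        rw [mem_nthRootsFinset hk, ← pow_mul, mul_comm, pow_mul, h₀.pow_eq_one, one_pow]
    have hinj : ∀ a ∈ Finset.range k, ∀ b ∈ Finset.range k, ζ₀ ^ a = ζ₀ ^ b → a = b := by
      intro a ha b hb hab
      exact h₀.pow_inj (Finset.mem_range.mp ha) (Finset.mem_range.mp hb) hab
    have h3 : ∑ z ∈ nthRootsFinset k (1 : ℂ), z ^ t = ∑ i ∈ Finset.range k, (ζ₀ ^ t) ^ i := by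
      rw [h2, Finset.sum_image hinj]
      refine Finset.sum_congr rfl fun i _ => ?_
      rw [← zpow_natCast ζ₀ i, ← _root_.zpow_mul, mul_comm, _root_.zpow_mul, zpow_natCast]
    rw [h1, h3]
    by_cases hdvd : (k : ℤ) ∣ t
    · rw [if_pos hdvd]
      have : ζ₀ ^ t = 1 := (h₀.zpow_eq_one_iff_dvd t).mpr hdvd
      simp [this]
    · rw [if_neg hdvd]
      have hne : ζ₀ ^ t ≠ 1 := fun h => hdvd ((h₀.zpow_eq_one_iff_dvd t).mp h)
      rw [geom_sum_eq hne]
      have : (ζ₀ ^ t) ^ k = 1 := by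
        rw [← zpow_natCast (ζ₀ ^ t) k, ← _root_.zpow_mul, mul_comm, _root_.zpow_mul, zpow_natCast,
          h₀.pow_eq_one, _root_.one_zpow]
      rw [this, sub_self, zero_div]
  have := (ArithmeticFunction.sum_eq_iff_sum_mul_moebius_eq
    (f := fun d => ram d t) (g := fun k => if (k : ℤ) ∣ t then (k : ℂ) else 0)).mp key m hm
  rw [← this, ← Nat.map_div_left_divisors, Finset.sum_map]
  rfl

lemma h_dvd_of_squarefree {n d : ℕ} (hn : 0 < n) (hd : d ∣ n) (hsq : Squarefree (n / d)) :
    n / rad n ∣ d := by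
  set e := n / d with he
  have hed : e * d = n := Nat.div_mul_cancel hd
  have hedvd : e ∣ n := Nat.div_dvd_of_dvd hd
  have hern : e ∣ rad n := by
    conv_lhs => rw [← Nat.prod_primeFactors_of_squarefree hsq]
    exact Finset.prod_dvd_prod_of_subset _ _ _ (Nat.primeFactors_mono hedvd hn.ne')
  obtain ⟨c, hc⟩ := hern
  have hmul : (n / rad n) * rad n = n := Nat.div_mul_cancel (rad_dvd n)
  have he0 : e ≠ 0 := by
    intro h0; rw [h0, zero_mul] at hed; exact hn.ne' hed.symm
  have : e * (c * (n / rad n)) = e * d :=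
    calc e * (c * (n / rad n)) = rad n * (n / rad n) := by rw [← mul_assoc, ← hc]
      _ = n := by rw [mul_comm, hmul]
      _ = e * d := hed.symm
  have hd' : d = c * (n / rad n) := (mul_left_cancel₀ he0 this).symm
  exact ⟨c, by rw [hd']; ring⟩

lemma mem_image_of_moebius_ne {n d : ℕ} (hn : 0 < n) (hd : d ∈ n.divisors)
    (hμ : ArithmeticFunction.moebius (n / d) ≠ 0) :
    d ∈ (rad n).divisors.image (fun e => (n / rad n) * e) := by
  have hdn : d ∣ n := (Nat.mem_divisors.mp hd).1
  have hsq : Squarefree (n / d) := by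
    by_contra hns
    exact hμ (ArithmeticFunction.moebius_eq_zero_of_not_squarefree hns)
  obtain ⟨e, he⟩ := h_dvd_of_squarefree hn hdn hsq
  have hh : 0 < n / rad n :=
    Nat.div_pos (Nat.le_of_dvd hn (rad_dvd n)) (Nat.pos_of_dvd_of_pos (rad_dvd n) hn)
  have hmul : (n / rad n) * rad n = n := Nat.div_mul_cancel (rad_dvd n)
  refine Finset.mem_image.mpr ⟨e, Nat.mem_divisors.mpr ⟨?_, ?_⟩, he.symm⟩
  · have : (n / rad n) * e ∣ (n / rad n) * rad n := by rw [hmul, ← he]; exact hdn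
    exact (mul_dvd_mul_iff_left hh.ne').mp this
  · exact (Nat.pos_of_dvd_of_pos (rad_dvd n) hn).ne'

lemma ram_mul (n : ℕ) (hn : 0 < n) (s : ℤ) :
    ram n (((n / rad n : ℕ) : ℤ) * s) = ((n / rad n : ℕ) : ℂ) * ram (rad n) s := by
  have hn' : 0 < rad n := Nat.pos_of_dvd_of_pos (rad_dvd n) hn
  have hh : 0 < n / rad n := Nat.div_pos (Nat.le_of_dvd hn (rad_dvd n)) hn'
  have hmul : (n / rad n) * rad n = n := Nat.div_mul_cancel (rad_dvd n)
  rw [ram_formula _ hn, ram_formula _ hn', Finset.mul_sum]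
  have himage : (rad n).divisors.image (fun e => (n / rad n) * e) ⊆ n.divisors := by
    intro x hx
    obtain ⟨e, he, rfl⟩ := Finset.mem_image.mp hx
    refine Nat.mem_divisors.mpr ⟨?_, hn.ne'⟩
    have h2 := mul_dvd_mul_left (n / rad n) (Nat.mem_divisors.mp he).1
    rwa [hmul] at h2
  rw [← Finset.sum_subset himage (fun x hx hnx => ?_)]
  · rw [Finset.sum_image (fun a _ b _ hab =>
      mul_left_cancel₀ hh.ne' hab)]
    refine Finset.sum_congr rfl fun e he => ?_
    have hee : e ∣ rad n := (Nat.mem_divisors.mp he).1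
    have hq : n / ((n / rad n) * e) = rad n / e := by
      have h2 := Nat.mul_div_mul_left (rad n) e hh
      rwa [hmul] at h2
    rw [hq]
    have hdvd : (((n / rad n) * e : ℕ) : ℤ) ∣ ((n / rad n : ℕ) : ℤ) * s ↔ (e : ℤ) ∣ s := by
      push_cast
      exact mul_dvd_mul_iff_left (by exact_mod_cast hh.ne' : ((n / rad n : ℕ) : ℤ) ≠ 0)
    split_ifs with h1 h2 h2
    · push_cast; ring
    · exact absurd (hdvd.mp h1) h2
    · exact absurd (hdvd.mpr h2) h1
    · ring
  · by_cases hμ : ArithmeticFunction.moebius (n / x) = 0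
    · rw [hμ]; push_cast; ring
    · exact absurd (mem_image_of_moebius_ne hn hx hμ) hnx

lemma ram_zero_of (n : ℕ) (hn : 0 < n) (s r : ℤ) (hr : ¬ ((n / rad n : ℕ) : ℤ) ∣ r) :
    ram n (((n / rad n : ℕ) : ℤ) * s + r) = 0 := by
  rw [ram_formula _ hn]
  refine Finset.sum_eq_zero fun d hd => ?_
  by_cases hμ : ArithmeticFunction.moebius (n / d) = 0
  · rw [hμ]; push_cast; ring
  · have hsq : Squarefree (n / d) := by
      by_contra hns
      exact hμ (ArithmeticFunction.moebius_eq_zero_of_not_squarefree hns)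
    have hhd : n / rad n ∣ d := h_dvd_of_squarefree hn (Nat.mem_divisors.mp hd).1 hsq
    rw [if_neg, mul_zero]
    intro hdt
    have : ((n / rad n : ℕ) : ℤ) ∣ ((n / rad n : ℕ) : ℤ) * s + r :=
      dvd_trans (Int.natCast_dvd_natCast.mpr hhd) hdt
    exact hr ((dvd_add_right (Dvd.intro s rfl)).mp this)

lemma ram_sub_comm {m : ℕ} (hm : 0 < m) (a b : ℤ) : ram m (a - b) = ram m (b - a) := by
  rw [ram_formula _ hm, ram_formula _ hm]
  refine Finset.sum_congr rfl fun d _ => ?_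
  congr 1
  simp only [dvd_sub_comm]

/-- With `n' = rad n` and `h = n / n'`, writing the 0-based indices
`i = h * i' + i''` and `j = h * j' + j''` (`0 ≤ i', j' < φ(n')`, `0 ≤ i'', j'' < h`),
the `(i,j)` entry of `G_n` equals `h * c_{n'}(i' - j')` if `i'' = j''` and `0`
otherwise; i.e. `G_n = h • (G_{n'} ⊗ Id_h)`. -/
theorem gram_entry_kronecker (n : ℕ) (hn : 0 < n)
    (ζ : Fin n.totient → ℂ) (hζinj : Function.Injective ζ)
    (hζ : ∀ i, IsPrimitiveRoot (ζ i) n)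
    (i j : Fin n.totient) (i' j' : Fin (rad n).totient) (i'' j'' : Fin (n / rad n))
    (hi : (i : ℕ) = (n / rad n) * (i' : ℕ) + (i'' : ℕ))
    (hj : (j : ℕ) = (n / rad n) * (j' : ℕ) + (j'' : ℕ)) :
    ((vand ζ)ᴴ * vand ζ) i j =
      if i'' = j'' then ((n / rad n : ℕ) : ℂ) * ram (rad n) ((i' : ℤ) - (j' : ℤ)) else 0 := by
  have hn' : 0 < rad n := Nat.pos_of_dvd_of_pos (rad_dvd n) hn
  have hh : 0 < n / rad n := Nat.div_pos (Nat.le_of_dvd hn (rad_dvd n)) hn'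
  -- the Gram entry is a Ramanujan sum
  have himg : Finset.image ζ Finset.univ = primitiveRoots n ℂ := by
    apply Finset.eq_of_subset_of_card_le
    · intro z hz
      obtain ⟨k, _, rfl⟩ := Finset.mem_image.mp hz
      exact (mem_primitiveRoots hn).mpr (hζ k)
    · rw [(Complex.isPrimitiveRoot_exp n hn.ne').card_primitiveRoots,
        Finset.card_image_of_injective _ hζinj, Finset.card_univ, Fintype.card_fin]
  have hentry : ((vand ζ)ᴴ * vand ζ) i j = ram n (((j : ℕ) : ℤ) - ((i : ℕ) : ℤ)) := by
    rw [ram, ← himg, Finset.sum_image (fun a _ b _ hab => hζinj hab), Matrix.mul_apply]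
    refine Finset.sum_congr rfl fun k _ => ?_
    have hz0 : ζ k ≠ 0 := (hζ k).ne_zero hn.ne'
    have habs : ‖ζ k‖ = 1 :=
      Complex.norm_eq_one_of_pow_eq_one (hζ k).pow_eq_one hn.ne'
    simp only [conjTranspose_apply, vand, Matrix.of_apply, star_pow, RCLike.star_def]
    rw [← Complex.inv_eq_conj habs, inv_pow, ← zpow_natCast (ζ k) (j : ℕ),
      ← zpow_natCast (ζ k) (i : ℕ), ← _root_.zpow_neg, ← zpow_add₀ hz0]
    congr 1
    ring
  have hiZ : ((i : ℕ) : ℤ) = ((n / rad n : ℕ) : ℤ) * ((i' : ℕ) : ℤ) + ((i'' : ℕ) : ℤ) := by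
    exact_mod_cast hi
  have hjZ : ((j : ℕ) : ℤ) = ((n / rad n : ℕ) : ℤ) * ((j' : ℕ) : ℤ) + ((j'' : ℕ) : ℤ) := by
    exact_mod_cast hj
  by_cases hcase : i'' = j''
  · rw [hentry, if_pos hcase]
    have heq : ((j : ℕ) : ℤ) - ((i : ℕ) : ℤ)
        = ((n / rad n : ℕ) : ℤ) * (((j' : ℕ) : ℤ) - ((i' : ℕ) : ℤ)) := by
      rw [hiZ, hjZ, hcase]; ring
    rw [heq, ram_mul n hn, ram_sub_comm hn']
  · rw [hentry, if_neg hcase]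
    have heq : ((j : ℕ) : ℤ) - ((i : ℕ) : ℤ)
        = ((n / rad n : ℕ) : ℤ) * (((j' : ℕ) : ℤ) - ((i' : ℕ) : ℤ))
          + (((j'' : ℕ) : ℤ) - ((i'' : ℕ) : ℤ)) := by
      rw [hiZ, hjZ]; ring
    rw [heq]
    refine ram_zero_of n hn _ _ fun hdvd => ?_
    have hne : ((j'' : ℕ) : ℤ) - ((i'' : ℕ) : ℤ) ≠ 0 := by
      intro hq
      exact hcase (Fin.ext (by omega)).symm
    have hle := Int.le_of_dvd (abs_pos.mpr hne) ((dvd_abs _ _).mpr hdvd)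
    have h1 : ((j'' : ℕ) : ℤ) < ((n / rad n : ℕ) : ℤ) := by exact_mod_cast j''.isLt
    have h2 : ((i'' : ℕ) : ℤ) < ((n / rad n : ℕ) : ℤ) := by exact_mod_cast i''.isLt
    have habs : |((j'' : ℕ) : ℤ) - ((i'' : ℕ) : ℤ)| < ((n / rad n : ℕ) : ℤ) :=
      abs_sub_lt_iff.mpr ⟨by omega, by omega⟩
    exact absurd (lt_of_le_of_lt hle habs) (lt_irrefl _)
end

section
/- Let n be a positive integer, n′ := rad(n), and h := n/n′. For every integer t not divisible by h, the Ramanujan sum c_n(t) equals 0. -/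
open Matrix Polynomial BigOperators

lemma coprime_add_of_rad_dvd {n a s : ℕ} (hn : 0 < n) (ha : a.Coprime n)
    (hs : rad n ∣ s) : (a + s).Coprime n := by
  by_contra hcon
  have hg0 : Nat.gcd (a + s) n ≠ 0 :=
    fun hh => hn.ne' (Nat.eq_zero_of_gcd_eq_zero_right hh)
  have hg1 : Nat.gcd (a + s) n ≠ 1 := hcon
  set p := (Nat.gcd (a + s) n).minFac with hp
  have hpp : p.Prime := Nat.minFac_prime hg1
  have hpas : p ∣ a + s := (Nat.minFac_dvd _).trans (Nat.gcd_dvd_left _ _)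
  have hpn : p ∣ n := (Nat.minFac_dvd _).trans (Nat.gcd_dvd_right _ _)
  have hprad : p ∣ rad n :=
    Finset.dvd_prod_of_mem _ (Nat.mem_primeFactors.mpr ⟨hpp, hpn, hn.ne'⟩)
  have hpa : p ∣ a := by
    have := Nat.dvd_sub hpas (hprad.trans hs)
    simpa using this
  have : p ∣ 1 := ha ▸ Nat.dvd_gcd hpa hpn
  exact hpp.one_lt.ne' (Nat.eq_one_of_dvd_one this)

/-- multiplication by `ζ ^ s` permutes primitive roots when `rad n ∣ s` -/
lemma isPrimitiveRoot_pow_mul {n s : ℕ} (hn : 0 < n) {ζ z : ℂ}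
    (hζ : IsPrimitiveRoot ζ n) (hz : IsPrimitiveRoot z n) (hs : rad n ∣ s) :
    IsPrimitiveRoot (ζ ^ s * z) n := by
  have : NeZero n := ⟨hn.ne'⟩
  obtain ⟨a, _, rfl⟩ := hζ.eq_pow_of_pow_eq_one hz.pow_eq_one
  have ha : a.Coprime n := (hζ.pow_iff_coprime hn a).mp hz
  rw [← pow_add, Nat.add_comm]
  exact hζ.pow_of_coprime _ (coprime_add_of_rad_dvd hn ha hs)

/-- With `h = n / rad n`, if `h` does not divide `t` then `c_n(t) = 0`. -/
theorem ram_eq_zero_of_not_dvd (n : ℕ) (hn : 0 < n) (t : ℤ)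
    (ht : ¬ (((n / rad n : ℕ) : ℤ) ∣ t)) :
    ram n t = 0 := by
  classical
  have ht0 : t ≠ 0 := fun h => ht (h ▸ dvd_zero _)
  set T := t.natAbs with hT
  have hT0 : T ≠ 0 := Int.natAbs_ne_zero.mpr ht0
  have hradn : rad n ∣ n := Nat.prod_primeFactors_dvd n
  have hrad0 : 0 < rad n := Nat.pos_of_dvd_of_pos hradn hn
  set h := n / rad n with hh
  have hh0 : h ≠ 0 := (Nat.div_pos (Nat.le_of_dvd hn hradn) hrad0).ne'
  have htT : ¬ h ∣ T := fun hd => ht (Int.natCast_dvd.mpr hd)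
  have hnle : ¬ h.factorization ≤ T.factorization :=
    fun hle => htT ((Nat.factorization_le_iff_dvd hh0 hT0).mp hle)
  rw [Finsupp.le_iff] at hnle
  push_neg at hnle
  obtain ⟨p, hpsupp, hlt⟩ := hnle
  have hpp : p.Prime := Nat.prime_of_mem_primeFactors
    (by rwa [← Nat.support_factorization])
  set k := T.factorization p with hk
  set e := n.factorization p with he
  have hradfact : ∀ q ∈ n.primeFactors, (rad n).factorization q = 1 := by
    intro q hq
    have hqp : q.Prime := Nat.prime_of_mem_primeFactors hq
    rw [rad, Nat.factorization_prod (fun r hr => (Nat.prime_of_mem_primeFactors hr).ne_zero)]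
    rw [Finsupp.finset_sum_apply, Finset.sum_eq_single q]
    · simp [hqp.factorization]
    · intro r hr hrq
      simp [Nat.Prime.factorization (Nat.prime_of_mem_primeFactors hr),
        Finsupp.single_apply, hrq]
    · intro hq'; exact absurd hq hq'
  have hph : p ∣ h := Nat.dvd_of_factorization_pos (by omega)
  have hpn : p ∈ n.primeFactors := by
    rw [Nat.mem_primeFactors]
    exact ⟨hpp, hph.trans (Nat.div_dvd_of_dvd hradn), hn.ne'⟩
  have hhfact : h.factorization p = e - 1 := by
    rw [hh, Nat.factorization_div hradn, Finsupp.tsub_apply, hradfact p hpn]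
  have hek : k + 2 ≤ e := by
    have h1 : (1 : ℕ) ≤ e := by
      have h2 : (rad n).factorization ≤ n.factorization :=
        (Nat.factorization_le_iff_dvd hrad0.ne' hn.ne').mpr hradn
      have := h2 p
      have := hradfact p hpn
      omega
    omega
  have hpkdvd : p ^ (k + 1) ∣ n :=
    (Nat.Prime.pow_dvd_iff_le_factorization hpp hn.ne').mpr (by omega)
  set s := n / p ^ (k + 1) with hsdef
  have hs0 : s ≠ 0 :=
    (Nat.div_pos (Nat.le_of_dvd hn hpkdvd) (pow_pos hpp.pos _)).ne'
  have hns : n = s * p ^ (k + 1) := (Nat.div_mul_cancel hpkdvd).symm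
  have hrads : rad n ∣ s := by
    rw [← Nat.factorization_le_iff_dvd hrad0.ne' hs0, Finsupp.le_def]
    intro q
    by_cases hq : q ∈ n.primeFactors
    · rw [hradfact q hq, hsdef, Nat.factorization_div hpkdvd, Finsupp.tsub_apply,
        hpp.factorization_pow, Finsupp.single_apply]
      have hq1 : 1 ≤ n.factorization q := by
        rw [← Nat.support_factorization] at hq
        have := Finsupp.mem_support_iff.mp hq; omega
      by_cases hqp : p = q
      · subst hqp; rw [if_pos rfl]; omega
      · rw [if_neg hqp]; omega
    · have h0 : (rad n).factorization q = 0 := by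
        rw [← Finsupp.notMem_support_iff, Nat.support_factorization]
        intro hq'
        exact hq (Nat.mem_primeFactors.mpr ⟨Nat.prime_of_mem_primeFactors hq',
          (Nat.dvd_of_mem_primeFactors hq').trans hradn, hn.ne'⟩)
      simp [h0]
  obtain ⟨ζ, hζ⟩ : ∃ ζ : ℂ, IsPrimitiveRoot ζ n :=
    ⟨_, Complex.isPrimitiveRoot_exp n hn.ne'⟩
  have hζs : IsPrimitiveRoot (ζ ^ s) (p ^ (k + 1)) := hζ.pow hn hns
  have hw : (ζ ^ s) ^ t ≠ 1 := by
    intro h1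
    rw [hζs.zpow_eq_one_iff_dvd] at h1
    have hdT : p ^ (k + 1) ∣ T := Int.natCast_dvd.mp h1
    rw [Nat.Prime.pow_dvd_iff_le_factorization hpp hT0] at hdT
    omega
  have hsn : s ≤ n := Nat.le_of_dvd hn ⟨p ^ (k + 1), hns⟩
  have key : (ζ ^ s) ^ t * ram n t = ram n t := by
    rw [ram, Finset.mul_sum]
    refine Finset.sum_bij' (fun z _ => ζ ^ s * z) (fun z _ => ζ ^ (n - s) * z) ?_ ?_ ?_ ?_ ?_
    · intro z hz
      rw [mem_primitiveRoots hn] at hz ⊢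
      exact isPrimitiveRoot_pow_mul hn hζ hz hrads
    · intro z hz
      rw [mem_primitiveRoots hn] at hz ⊢
      exact isPrimitiveRoot_pow_mul hn hζ hz (Nat.dvd_sub hradn hrads)
    · intro z hz
      show ζ ^ (n - s) * (ζ ^ s * z) = z
      rw [← mul_assoc, ← pow_add, Nat.sub_add_cancel hsn, hζ.pow_eq_one, one_mul]
    · intro z hz
      show ζ ^ s * (ζ ^ (n - s) * z) = z
      rw [← mul_assoc, ← pow_add, Nat.add_sub_cancel' hsn, hζ.pow_eq_one, one_mul]
    · intro z hz
      show (ζ ^ s) ^ t * z ^ t = (ζ ^ s * z) ^ t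
      rw [mul_zpow]
  have hz0 : ((ζ ^ s) ^ t - 1) * ram n t = 0 := by
    rw [sub_mul, one_mul, key, sub_self]
  rcases mul_eq_zero.mp hz0 with hc | hc
  · exact absurd (by linear_combination hc) hw
  · exact hc
end

section
/- Let n be a positive integer, n′ := rad(n), and h := n/n′. For every integer t, the Ramanujan sums satisfy c_n(h·t) = h · c_{n′}(t). -/
open Matrix Polynomial BigOperators

lemma rad_factorization {n p : ℕ} (hp : p ∈ n.primeFactors) :
    (rad n).factorization p = 1 := by
  unfold rad
  rw [Nat.factorization_prod (fun q hq => (Nat.prime_of_mem_primeFactors hq).pos.ne')]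
  rw [Finset.sum_apply']
  rw [Finset.sum_eq_single p]
  · exact Nat.Prime.factorization_self (Nat.prime_of_mem_primeFactors hp)
  · intro q hq hqp
    rw [(Nat.prime_of_mem_primeFactors hq).factorization, Finsupp.single_apply,
      if_neg hqp]
  · intro h; exact absurd hp h

lemma key_arith {n : ℕ} (hn : 0 < n) {d : ℕ} (hd : d ∣ n)
    (heq : d = rad n * Nat.gcd d (n / rad n)) : d = n := by
  have hd0 : d ≠ 0 := by
    rintro rfl
    exact hn.ne' (Nat.eq_zero_of_zero_dvd hd)
  refine Nat.dvd_antisymm hd ?_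
  rw [← Nat.factorization_le_iff_dvd hn.ne' hd0]
  intro p
  by_cases hp : p ∈ n.primeFactors
  · have hg0 : Nat.gcd d (n / rad n) ≠ 0 := by
      intro h0; rw [h0, mul_zero] at heq; exact hd0 heq
    have hrad0 : rad n ≠ 0 := (rad_pos n).ne'
    have hb := congrArg (fun m => m.factorization p) heq
    rw [Nat.factorization_mul hrad0 hg0, Finsupp.add_apply,
      Nat.factorization_gcd hd0 (by
        have := Nat.div_pos (Nat.le_of_dvd hn (rad_dvd n)) (rad_pos n)
        exact this.ne'),
      Finsupp.inf_apply, rad_factorization hp,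
      Nat.factorization_div (rad_dvd n), Finsupp.tsub_apply,
      rad_factorization hp] at hb
    have hle : d.factorization p ≤ n.factorization p :=
      (Nat.factorization_le_iff_dvd hd0 hn.ne').mpr hd p
    have ha1 : 1 ≤ n.factorization p :=
      (Nat.Prime.factorization_pos_of_dvd (Nat.prime_of_mem_primeFactors hp) hn.ne'
        (Nat.dvd_of_mem_primeFactors hp))
    omega
  · have : n.factorization p = 0 := by
      rw [← Nat.support_factorization] at hp
      exact Finsupp.notMem_support_iff.mp hp
    omega

lemma prim_of_pow {n : ℕ} (hn : 0 < n) {z : ℂ}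
    (hw : IsPrimitiveRoot (z ^ (n / rad n)) (rad n)) : IsPrimitiveRoot z n := by
  set h := n / rad n with hhdef
  have hd : rad n ∣ n := rad_dvd n
  have hh : 0 < h := Nat.div_pos (Nat.le_of_dvd hn hd) (rad_pos n)
  have hmul : n = h * rad n := by
    rw [hhdef, Nat.div_mul_cancel hd]
  have hz1 : z ^ n = 1 := by
    rw [hmul, pow_mul, hw.pow_eq_one]
  have hdvd : orderOf z ∣ n := orderOf_dvd_of_pow_eq_one hz1
  have hord : orderOf (z ^ h) = orderOf z / Nat.gcd (orderOf z) h :=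
    orderOf_pow' z hh.ne'
  have heq0 : rad n = orderOf z / Nat.gcd (orderOf z) h := hw.eq_orderOf.trans hord
  have heq : orderOf z = rad n * Nat.gcd (orderOf z) h := by
    rw [heq0, Nat.gcd_comm, Nat.div_mul_cancel (Nat.gcd_dvd_right h (orderOf z))]
  have := key_arith hn hdvd heq
  exact this ▸ IsPrimitiveRoot.orderOf z

lemma fiber_card {n : ℕ} (hn : 0 < n) {w : ℂ} (hw : IsPrimitiveRoot w (rad n)) :
    ((primitiveRoots n ℂ).filter (fun z => z ^ (n / rad n) = w)).card = n / rad n := by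
  set h := n / rad n with hhdef
  have hh : 0 < h := Nat.div_pos (Nat.le_of_dvd hn (rad_dvd n)) (rad_pos n)
  have hw0 : w ≠ 0 := hw.ne_zero (rad_pos n).ne'
  have hξ := Complex.isPrimitiveRoot_exp h hh.ne'
  have hnodup := hξ.nthRoots_nodup hw0
  have hset : (primitiveRoots n ℂ).filter (fun z => z ^ h = w) = (nthRoots h w).toFinset := by
    ext z
    simp only [Finset.mem_filter, Multiset.mem_toFinset, mem_nthRoots hh]
    constructor
    · rintro ⟨_, hz⟩; exact hz
    · intro hz
      exact ⟨(mem_primitiveRoots hn).2 (prim_of_pow hn (hz ▸ hw)), hz⟩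
  rw [hset, Multiset.toFinset_card_of_nodup hnodup, hξ.card_nthRoots w,
    if_pos (IsAlgClosed.exists_pow_nat_eq w hh)]

/-- With `h = n / rad n`, for every integer `t` one has
`c_n(h * t) = h * c_{rad n}(t)`. -/
theorem ram_mul_eq (n : ℕ) (hn : 0 < n) (t : ℤ) :
    ram n (((n / rad n : ℕ) : ℤ) * t) = ((n / rad n : ℕ) : ℂ) * ram (rad n) t := by
  set h := n / rad n with hhdef
  have hh : 0 < h := Nat.div_pos (Nat.le_of_dvd hn (rad_dvd n)) (rad_pos n)
  have hmaps : ∀ z ∈ primitiveRoots n ℂ, z ^ h ∈ primitiveRoots (rad n) ℂ := by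
    intro z hz
    rw [mem_primitiveRoots (rad_pos n)]
    exact ((mem_primitiveRoots hn).1 hz).pow hn (Nat.div_mul_cancel (rad_dvd n)).symm
  unfold ram
  rw [← Finset.sum_fiberwise_of_maps_to hmaps (fun z => z ^ (((h : ℕ) : ℤ) * t)),
    Finset.mul_sum]
  refine Finset.sum_congr rfl fun w hw => ?_
  have hwp : IsPrimitiveRoot w (rad n) := (mem_primitiveRoots (rad_pos n)).1 hw
  have hcongr : ∀ z ∈ (primitiveRoots n ℂ).filter (fun z => z ^ h = w),
      z ^ (((h : ℕ) : ℤ) * t) = w ^ t := by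
    intro z hz
    obtain ⟨hz1, hz2⟩ := Finset.mem_filter.1 hz
    rw [← hz2, ← zpow_natCast z h, ← _root_.zpow_mul]
  rw [Finset.sum_congr rfl hcongr, Finset.sum_const, fiber_card hn hwp, nsmul_eq_mul]
end

section
/- For every odd positive integer n, the matrices G_{2n} and G_n (both of size φ(n) = φ(2n)) have the same characteristic polynomial; in particular they have the same eigenvalues with the same multiplicities. -/
open Matrix Polynomial BigOperators

/-- Conjugating by a diagonal involution preserves the characteristic polynomial. -/
lemma charpoly_diag_conj {k : ℕ} (d : Fin k → ℂ) (hd : ∀ i, d i * d i = 1)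
    (A : Matrix (Fin k) (Fin k) ℂ) :
    (Matrix.diagonal d * A * Matrix.diagonal d).charpoly = A.charpoly := by
  set D := Matrix.diagonal d with hD
  have hDD : D * D = 1 := by
    rw [hD, diagonal_mul_diagonal]
    convert Matrix.diagonal_one using 2
    funext i; exact hd i
  set D' := D.map (C : ℂ →+* ℂ[X]) with hD'
  have hD'2 : D' * D' = 1 := by
    rw [hD', ← Matrix.map_mul, hDD, Matrix.map_one _ (map_zero C) (map_one C)]
  have hdiagD' : D' = Matrix.diagonal (fun i => C (d i)) := by
    rw [hD', hD, Matrix.diagonal_map (map_zero C)]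
  have hch : Matrix.charmatrix (D * A * D) = D' * Matrix.charmatrix A * D' := by
    rw [Matrix.charmatrix, Matrix.charmatrix, mul_sub, sub_mul]
    congr 1
    · rw [Matrix.scalar_apply, hdiagD', diagonal_mul_diagonal, diagonal_mul_diagonal]
      have hfun : (fun i => C (d i) * X * C (d i)) = fun _ : Fin k => (X : ℂ[X]) := by
        funext i
        rw [mul_comm (C (d i)) X, mul_assoc, ← _root_.map_mul C, hd i, _root_.map_one C,
          mul_one]
      rw [hfun]
    · rw [RingHom.mapMatrix_apply, RingHom.mapMatrix_apply, hD', ← Matrix.map_mul,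
        ← Matrix.map_mul]
  rw [Matrix.charpoly, Matrix.charpoly, hch, Matrix.det_mul, Matrix.det_mul]
  have : D'.det * D'.det = 1 := by rw [← Matrix.det_mul, hD'2, Matrix.det_one]
  rw [mul_right_comm, this, one_mul]

/-- A sum over an injective family of primitive `N`-th roots is a sum over
all primitive `N`-th roots. -/
lemma sum_prim {N : ℕ} (hN : 0 < N) (g : Fin N.totient → ℂ)
    (hginj : Function.Injective g) (hg : ∀ i, IsPrimitiveRoot (g i) N)
    (f : ℂ → ℂ) : ∑ i, f (g i) = ∑ z ∈ primitiveRoots N ℂ, f z := by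
  have i0 : Fin N.totient := ⟨0, Nat.totient_pos.mpr hN⟩
  have hcard : (primitiveRoots N ℂ).card = N.totient := (hg i0).card_primitiveRoots
  have himg : Finset.univ.image g = primitiveRoots N ℂ := by
    apply Finset.eq_of_subset_of_card_le
    · intro z hz
      obtain ⟨i, _, rfl⟩ := Finset.mem_image.mp hz
      exact (mem_primitiveRoots hN).mpr (hg i)
    · rw [hcard, Finset.card_image_of_injective _ hginj, Finset.card_univ, Fintype.card_fin]
  rw [← himg, Finset.sum_image (fun i _ j _ h => hginj h)]

/-- If `n` is odd and `w` is a primitive `2n`-th root of unity, then `-w` is a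
primitive `n`-th root of unity. -/
lemma neg_prim {n : ℕ} (hn : 0 < n) (hodd : Odd n) {w : ℂ}
    (hw : IsPrimitiveRoot w (2 * n)) : IsPrimitiveRoot (-w) n := by
  have hwn : w ^ n = -1 :=
    IsPrimitiveRoot.eq_neg_one_of_two_right (hw.pow (by positivity) (mul_comm 2 n))
  constructor
  · rw [neg_pow, Odd.neg_one_pow hodd, hwn]; ring
  · intro l hl
    have h2l : w ^ (2 * l) = 1 := by
      have : ((-w) ^ l) ^ 2 = 1 := by rw [hl, one_pow]
      rwa [← pow_mul, mul_comm l 2, pow_mul, neg_sq, ← pow_mul] at this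
    have := hw.dvd_of_pow_eq_one _ h2l
    exact (mul_dvd_mul_iff_left (two_ne_zero)).mp this

/-- For odd `n`, negation maps the primitive `2n`-th roots of unity onto the
primitive `n`-th roots of unity. -/
lemma prim_image {n : ℕ} (hn : 0 < n) (hodd : Odd n)
    (hex : ∃ w : ℂ, IsPrimitiveRoot w (2 * n)) (hex' : ∃ z : ℂ, IsPrimitiveRoot z n) :
    (primitiveRoots (2 * n) ℂ).image (fun z => -z) = primitiveRoots n ℂ := by
  obtain ⟨w0, hw0⟩ := hex
  obtain ⟨z0, hz0⟩ := hex'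
  apply Finset.eq_of_subset_of_card_le
  · intro z hz
    obtain ⟨w, hw, rfl⟩ := Finset.mem_image.mp hz
    exact (mem_primitiveRoots hn).mpr
      (neg_prim hn hodd ((mem_primitiveRoots (by positivity)).mp hw))
  · rw [Finset.card_image_of_injective _ neg_injective, hz0.card_primitiveRoots,
      hw0.card_primitiveRoots, Nat.totient_mul (Nat.coprime_two_left.mpr hodd),
      Nat.totient_two, one_mul]

/-- For every odd positive integer `n`, the matrices `G_{2n}` and `G_n`
have the same characteristic polynomial (hence the same eigenvalues with
multiplicities). -/
theorem charpoly_gram_two_mul (n : ℕ) (hn : 0 < n) (hodd : Odd n)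
    (ζ : Fin n.totient → ℂ) (hζinj : Function.Injective ζ)
    (hζ : ∀ i, IsPrimitiveRoot (ζ i) n)
    (ξ : Fin (2 * n).totient → ℂ) (hξinj : Function.Injective ξ)
    (hξ : ∀ i, IsPrimitiveRoot (ξ i) (2 * n)) :
    ((vand ξ)ᴴ * vand ξ).charpoly = ((vand ζ)ᴴ * vand ζ).charpoly := by
  have h2n : 0 < 2 * n := by positivity
  have htot : (2 * n).totient = n.totient := by
    rw [Nat.totient_mul (Nat.coprime_two_left.mpr hodd), Nat.totient_two, one_mul]
  let e : Fin (2 * n).totient ≃ Fin n.totient := finCongr htot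
  set d : Fin n.totient → ℂ := fun j => (-1 : ℂ) ^ (j : ℕ) with hdd
  have hd : ∀ i, d i * d i = 1 := by
    intro i; rw [hdd]; dsimp only; rw [← mul_pow]; norm_num
  rw [← Matrix.charpoly_reindex e ((vand ξ)ᴴ * vand ξ),
    ← charpoly_diag_conj d hd ((vand ζ)ᴴ * vand ζ)]
  congr 1
  have hex2 : ∃ w : ℂ, IsPrimitiveRoot w (2 * n) :=
    ⟨ξ ⟨0, by rw [htot]; exact Nat.totient_pos.mpr hn⟩, hξ _⟩
  have hex1 : ∃ z : ℂ, IsPrimitiveRoot z n := ⟨ζ ⟨0, Nat.totient_pos.mpr hn⟩, hζ _⟩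
  have himg := prim_image hn hodd hex2 hex1
  ext j k
  have hL : (Matrix.reindex e e ((vand ξ)ᴴ * vand ξ)) j k
      = ∑ w ∈ primitiveRoots (2 * n) ℂ, (starRingEnd ℂ) (w ^ (j : ℕ)) * w ^ (k : ℕ) := by
    rw [Matrix.reindex_apply, Matrix.submatrix_apply, Matrix.mul_apply,
      ← sum_prim h2n ξ hξinj hξ (fun z => (starRingEnd ℂ) (z ^ (j : ℕ)) * z ^ (k : ℕ))]
    apply Finset.sum_congr rfl
    intro i _
    simp [vand, Matrix.conjTranspose_apply, e]
  have hR : (Matrix.diagonal d * ((vand ζ)ᴴ * vand ζ) * Matrix.diagonal d) j k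
      = ∑ w ∈ primitiveRoots (2 * n) ℂ, (starRingEnd ℂ) (w ^ (j : ℕ)) * w ^ (k : ℕ) := by
    rw [Matrix.mul_diagonal, Matrix.diagonal_mul, Matrix.mul_apply]
    have hA : (∑ i, (vand ζ)ᴴ j i * vand ζ i k)
        = ∑ z ∈ primitiveRoots n ℂ, (starRingEnd ℂ) (z ^ (j : ℕ)) * z ^ (k : ℕ) := by
      rw [← sum_prim hn ζ hζinj hζ (fun z => (starRingEnd ℂ) (z ^ (j : ℕ)) * z ^ (k : ℕ))]
      apply Finset.sum_congr rfl
      intro i _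
      simp [vand, Matrix.conjTranspose_apply]
    rw [hA, ← himg, Finset.sum_image (fun a _ b _ h => neg_injective h),
      Finset.mul_sum, Finset.sum_mul]
    apply Finset.sum_congr rfl
    intro w _
    have h1 : ((-1 : ℂ)) ^ (j : ℕ) * (-1 : ℂ) ^ (j : ℕ) = 1 := by rw [← mul_pow]; norm_num
    have h2 : ((-1 : ℂ)) ^ (k : ℕ) * (-1 : ℂ) ^ (k : ℕ) = 1 := by rw [← mul_pow]; norm_num
    rw [hdd]
    dsimp only
    rw [neg_pow w, neg_pow w, _root_.map_mul (starRingEnd ℂ), map_pow, map_pow, map_neg, _root_.map_one (starRingEnd ℂ)]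
    linear_combination ((starRingEnd ℂ) w ^ (j : ℕ) * w ^ (k : ℕ)
        * ((-1 : ℂ) ^ (j : ℕ) * (-1) ^ (j : ℕ))) * h2
      + ((starRingEnd ℂ) w ^ (j : ℕ) * w ^ (k : ℕ)) * h1
  rw [hL, hR]
end

section
/- For every odd positive integer n, one has G_{2n} = J^{−1} G_n J, where J is the m×m diagonal matrix with diagonal entries J_{i,i} = (−1)^i (m := φ(n)); in particular G_{2n} and G_n are similar. -/
open Matrix Polynomial BigOperators

lemma aux_neg_prim {n : ℕ} (hn : 0 < n) (hodd : Odd n) {ξ : ℂ}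
    (h : IsPrimitiveRoot ξ (2 * n)) : IsPrimitiveRoot (-ξ) n := by
  have hξn : ξ ^ n = -1 := by
    have h2 : ξ ^ n * ξ ^ n = 1 := by
      rw [← pow_add, ← two_mul]; exact h.pow_eq_one
    rcases mul_self_eq_one_iff.mp h2 with h1 | h1
    · exfalso
      have := Nat.le_of_dvd hn (h.dvd_of_pow_eq_one n h1); omega
    · exact h1
  constructor
  · rw [hodd.neg_pow, hξn, neg_neg]
  · intro l hl
    have h2l : ξ ^ (2 * l) = 1 := by
      calc ξ ^ (2 * l) = (ξ ^ 2) ^ l := by rw [pow_mul]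
        _ = ((-ξ) ^ 2) ^ l := by rw [neg_sq]
        _ = (-ξ) ^ (2 * l) := by rw [pow_mul]
        _ = ((-ξ) ^ l) ^ 2 := by rw [mul_comm, pow_mul]
        _ = 1 := by rw [hl, one_pow]
    have := h.dvd_of_pow_eq_one _ h2l
    exact (mul_dvd_mul_iff_left (two_ne_zero)).mp this

lemma aux_sum_prim {n : ℕ} (hn : 0 < n) (g : Fin n.totient → ℂ)
    (hg : Function.Injective g) (hmem : ∀ i, IsPrimitiveRoot (g i) n)
    (f : ℂ → ℂ) : ∑ i, f (g i) = ∑ z ∈ primitiveRoots n ℂ, f z := by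
  have himg : Finset.univ.image g = primitiveRoots n ℂ := by
    apply Finset.eq_of_subset_of_card_le
    · intro z hz
      obtain ⟨i, _, rfl⟩ := Finset.mem_image.mp hz
      exact (mem_primitiveRoots hn).mpr (hmem i)
    · rw [Complex.card_primitiveRoots, Finset.card_image_of_injective _ hg,
        Finset.card_univ, Fintype.card_fin]
  rw [← himg, Finset.sum_image (fun a _ b _ h => hg h)]

/-- For every odd positive integer `n`, `G_{2n} = J⁻¹ * G_n * J`,
where `J` is the diagonal matrix with entries `J_{i,i} = (-1)^i` (1-based `i`);
here `G_{2n}` is built from an enumeration `ξ` of the primitive `2n`-th roots of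
unity (note `φ(2n) = φ(n)` for odd `n`). -/
theorem gram_two_mul_similar (n : ℕ) (hn : 0 < n) (hodd : Odd n)
    (ζ : Fin n.totient → ℂ) (hζinj : Function.Injective ζ)
    (hζ : ∀ i, IsPrimitiveRoot (ζ i) n)
    (ξ : Fin n.totient → ℂ) (hξinj : Function.Injective ξ)
    (hξ : ∀ i, IsPrimitiveRoot (ξ i) (2 * n)) :
    (vand ξ)ᴴ * vand ξ =
      (Matrix.diagonal fun i : Fin n.totient => (-1 : ℂ) ^ ((i : ℕ) + 1))⁻¹ *
        ((vand ζ)ᴴ * vand ζ) *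
        Matrix.diagonal fun i : Fin n.totient => (-1 : ℂ) ^ ((i : ℕ) + 1) := by
  set d : Fin n.totient → ℂ := fun i => (-1 : ℂ) ^ ((i : ℕ) + 1) with hd
  have hdinv : (Matrix.diagonal d)⁻¹ = Matrix.diagonal d := by
    apply Matrix.inv_eq_right_inv
    rw [Matrix.diagonal_mul_diagonal]
    convert Matrix.diagonal_one with i
    rw [hd, ← pow_add, ← two_mul, pow_mul, neg_one_sq, one_pow]
  rw [hdinv]
  ext j k
  have hrhs : (Matrix.diagonal d * ((vand ζ)ᴴ * vand ζ) * Matrix.diagonal d) j k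
      = d j * ((vand ζ)ᴴ * vand ζ) j k * d k := by
    rw [Matrix.mul_diagonal, Matrix.diagonal_mul]
  rw [hrhs]
  set f : ℂ → ℂ := fun z => (starRingEnd ℂ z) ^ (j : ℕ) * z ^ (k : ℕ) with hf
  have hL : ((vand ξ)ᴴ * vand ξ) j k = ∑ i, f (ξ i) := by
    simp [Matrix.mul_apply, vand, Matrix.conjTranspose_apply, hf, map_pow]
  have hR : ((vand ζ)ᴴ * vand ζ) j k = ∑ i, f (ζ i) := by
    simp [Matrix.mul_apply, vand, Matrix.conjTranspose_apply, hf, map_pow]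
  have key : ∀ i, f (ξ i) = (-1 : ℂ) ^ ((j : ℕ) + (k : ℕ)) * f (-ξ i) := by
    intro i
    simp only [hf, map_neg]
    rw [neg_pow, neg_pow, pow_add]
    ring_nf
    simp [pow_mul']
  have hsum : ∑ i, f (ξ i) = (-1 : ℂ) ^ ((j : ℕ) + (k : ℕ)) * ∑ i, f (ζ i) := by
    rw [Finset.sum_congr rfl (fun i _ => key i), ← Finset.mul_sum,
      aux_sum_prim hn (fun i => -ξ i) (fun a b hab => hξinj (neg_injective hab))
        (fun i => aux_neg_prim hn hodd (hξ i)) f,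
      ← aux_sum_prim hn ζ hζinj hζ f]
  have hdpow : d j * d k = (-1 : ℂ) ^ ((j : ℕ) + (k : ℕ)) := by
    rw [hd, ← pow_add, show (j : ℕ) + 1 + ((k : ℕ) + 1) = ((j : ℕ) + (k : ℕ)) + 2 by ring,
      pow_add]
    norm_num
  rw [hL, hR, hsum, ← hdpow]
  ring
end

section
/- For every prime number p, the characteristic polynomial of G_p satisfies det(G_p − x·Id_{p−1}) = (p − x)^{p−2} · (1 − x); equivalently, the eigenvalues of G_p are p, with multiplicity p − 2, and 1, with multiplicity 1. -/
open Matrix Polynomial BigOperators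

/-- For every prime `p`,
`det(G_p - x • Id_{p-1}) = (p - x) ^ (p - 2) * (1 - x)` as polynomials in `x`;
i.e. the eigenvalues of `G_p` are `p` with multiplicity `p - 2` and `1` with
multiplicity `1`. -/
theorem charpoly_gram_prime (p : ℕ) (hp : p.Prime)
    (ζ : Fin p.totient → ℂ) (hζinj : Function.Injective ζ)
    (hζ : ∀ i, IsPrimitiveRoot (ζ i) p) :
    Matrix.det (((vand ζ)ᴴ * vand ζ).map Polynomial.C -
        (Polynomial.X : Polynomial ℂ) • (1 : Matrix (Fin p.totient) (Fin p.totient) (Polynomial ℂ)))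
      = (Polynomial.C ((p : ℂ)) - Polynomial.X) ^ (p - 2) * (1 - Polynomial.X) := by
  classical
  have hm : p.totient = p - 1 := Nat.totient_prime hp
  have hp2 : 2 ≤ p := hp.two_le
  have hm1 : 1 ≤ p.totient := by omega
  have hpow : ∀ i, ζ i ^ p = 1 := fun i => (hζ i).pow_eq_one
  have hz0 : ∀ i, ζ i ≠ 0 := by
    intro i h
    have h2 := hpow i
    rw [h, zero_pow hp.ne_zero] at h2
    exact zero_ne_one h2
  have hstar : ∀ i, star (ζ i) = (ζ i)⁻¹ := fun i =>
    (Complex.inv_eq_conj (Complex.norm_eq_one_of_pow_eq_one (hpow i) hp.ne_zero)).symm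
  set V := vand ζ with hV
  set u : Fin p.totient → ℂ := fun i => star (ζ i) with hu
  -- key structure of V * Vᴴ
  have key : V * Vᴴ = (p : ℂ) • (1 : Matrix (Fin p.totient) (Fin p.totient) ℂ) - replicateCol Unit u * replicateRow Unit ζ := by
    ext i j
    have hentry : (V * Vᴴ) i j = ∑ k : Fin p.totient, (ζ i * star (ζ j)) ^ (k : ℕ) := by
      simp [Matrix.mul_apply, hV, vand, Matrix.conjTranspose_apply, mul_pow, star_pow]
    have hrhs : ((p : ℂ) • (1 : Matrix (Fin p.totient) (Fin p.totient) ℂ) - replicateCol Unit u * replicateRow Unit ζ) i j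
        = (p : ℂ) * (if i = j then 1 else 0) - star (ζ i) * ζ j := by
      simp [Matrix.sub_apply, Matrix.smul_apply, Matrix.one_apply, Matrix.mul_apply, hu,
        mul_comm]
    rw [hentry, hrhs]
    by_cases hij : i = j
    · subst hij
      have h1 : ζ i * star (ζ i) = 1 := by
        rw [hstar i, mul_inv_cancel₀ (hz0 i)]
      simp only [h1, one_pow, Finset.sum_const, Finset.card_univ, Fintype.card_fin,
        nsmul_eq_mul, mul_one, if_pos rfl]
      have h2 : star (ζ i) * ζ i = 1 := by rw [hstar i, inv_mul_cancel₀ (hz0 i)]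
      rw [h2]
      have hmc : ((p.totient : ℂ)) = (p : ℂ) - 1 := by
        rw [hm]
        push_cast [Nat.cast_sub hp.one_lt.le]
        ring
      rw [hmc]
      simp
    · set r : ℂ := ζ i * star (ζ j) with hr
      have hr0 : r ≠ 0 := mul_ne_zero (hz0 i) (by rw [hstar j]; exact inv_ne_zero (hz0 j))
      have hr1 : r ≠ 1 := by
        intro h
        apply hij
        apply hζinj
        have : ζ i = ζ j := by
          have := congrArg (fun z => z * ζ j) h
          simp only [one_mul] at this
          rw [hr, hstar j, mul_assoc, inv_mul_cancel₀ (hz0 j), mul_one] at this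
          exact this
        exact this
      have hrp : r ^ p = 1 := by
        rw [hr, mul_pow, hpow i, hstar j, inv_pow, hpow j, inv_one, mul_one]
      have hrm : r ^ p.totient = r⁻¹ := by
        have : r ^ p.totient * r = 1 := by
          rw [← pow_succ, hm, Nat.sub_add_cancel hp.one_lt.le, hrp]
        field_simp at this ⊢
        linear_combination this
      have hsum : ∑ k : Fin p.totient, r ^ (k : ℕ) = -r⁻¹ := by
        rw [Fin.sum_univ_eq_sum_range (fun k => r ^ k), geom_sum_eq hr1, hrm]
        rw [div_eq_iff (sub_ne_zero.mpr hr1)]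
        field_simp
        ring
      rw [hsum, if_neg hij]
      rw [hr, mul_inv, hstar i, hstar j, inv_inv, ← hstar i]
      ring
  -- reduce to evaluation at infinitely many points
  apply Polynomial.eq_of_infinite_eval_eq
  have hfin : ({0, (p : ℂ)} : Set ℂ).Finite := (Set.finite_singleton _).insert _
  apply (hfin.infinite_compl).mono
  intro x hx
  simp only [Set.mem_compl_iff, Set.mem_insert_iff, Set.mem_singleton_iff, not_or] at hx
  obtain ⟨hx0, hxp⟩ := hx
  simp only [Set.mem_setOf_eq]
  set G := Vᴴ * V with hG
  set M : Matrix (Fin p.totient) (Fin p.totient) (Polynomial ℂ) :=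
    G.map Polynomial.C - (Polynomial.X : Polynomial ℂ) • 1 with hM
  have hmap : M.map (evalRingHom x) = G - x • 1 := by
    ext i j
    simp [hM, Matrix.map_apply, Matrix.sub_apply, Matrix.smul_apply, Matrix.one_apply,
      apply_ite (eval x)]
  have hL : eval x M.det = (G - x • 1).det := by
    have h := RingHom.map_det (evalRingHom x) M
    simp only [RingHom.mapMatrix_apply, coe_evalRingHom] at h
    rw [h, ← coe_evalRingHom, hmap]
  rw [hL]
  -- Weinstein–Aronszajn : det (VᴴV - x) = det (VVᴴ - x)
  have e1 : G - x • 1 = (-x) • ((1 : Matrix (Fin p.totient) (Fin p.totient) ℂ) - (x⁻¹ • Vᴴ) * V) := by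
    rw [Matrix.smul_mul, smul_sub, smul_smul, neg_mul, mul_inv_cancel₀ hx0]
    simp [hG, sub_eq_add_neg]
    abel
  have e2 : V * Vᴴ - x • 1 = (-x) • ((1 : Matrix (Fin p.totient) (Fin p.totient) ℂ) - V * (x⁻¹ • Vᴴ)) := by
    rw [Matrix.mul_smul, smul_sub, smul_smul, neg_mul, mul_inv_cancel₀ hx0]
    simp [sub_eq_add_neg]
    abel
  have hWA : (G - x • 1).det = (V * Vᴴ - x • 1).det := by
    rw [e1, e2, Matrix.det_smul, Matrix.det_smul, Matrix.det_one_sub_mul_comm]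
  rw [hWA, key]
  set c : ℂ := (p : ℂ) - x with hc
  have hc0 : c ≠ 0 := sub_ne_zero.mpr fun h => hxp h.symm
  have e3 : (p : ℂ) • (1 : Matrix (Fin p.totient) (Fin p.totient) ℂ) - replicateCol Unit u * replicateRow Unit ζ - x • 1
      = c • ((1 : Matrix (Fin p.totient) (Fin p.totient) ℂ) + replicateCol Unit (fun i => -(c⁻¹) * u i) * replicateRow Unit ζ) := by
    ext i j
    simp only [Matrix.sub_apply, Matrix.add_apply, Matrix.smul_apply, Matrix.one_apply,
      Matrix.mul_apply, Matrix.replicateCol_apply, Matrix.replicateRow_apply, Finset.univ_unique,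
      Finset.sum_singleton, smul_eq_mul]
    have : c * (c⁻¹) = 1 := mul_inv_cancel₀ hc0
    by_cases hij : i = j <;> simp [hij, hc] <;> ring_nf <;>
      field_simp <;> ring
  rw [e3, Matrix.det_smul, Matrix.det_one_add_replicateCol_mul_replicateRow]
  have hdot : ζ ⬝ᵥ (fun i => -(c⁻¹) * u i) = -(c⁻¹) * p.totient := by
    unfold dotProduct
    have : ∀ i : Fin p.totient, ζ i * (-(c⁻¹) * u i) = -(c⁻¹) := by
      intro i
      show ζ i * (-(c⁻¹) * star (ζ i)) = -(c⁻¹)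
      rw [hstar i]
      have hzi : ζ i * (ζ i)⁻¹ = 1 := mul_inv_cancel₀ (hz0 i)
      linear_combination (-(c⁻¹)) * hzi
    rw [Finset.sum_congr rfl fun i _ => this i]
    simp [Finset.card_univ, mul_comm]
  rw [hdot]
  -- final arithmetic
  have hmc : ((p.totient : ℂ)) = (p : ℂ) - 1 := by
    rw [hm]; push_cast [Nat.cast_sub hp.one_lt.le]; ring
  have hrhs : eval x ((Polynomial.C ((p : ℂ)) - Polynomial.X) ^ (p - 2) * (1 - Polynomial.X))
      = c ^ (p - 2) * (1 - x) := by
    simp [hc]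
  rw [hrhs]
  have hmm : p.totient = (p - 2) + 1 := by omega
  rw [Fintype.card_fin, hmc, hmm, pow_succ, mul_assoc]
  congr 1
  have hci : c * c⁻¹ = 1 := mul_inv_cancel₀ hc0
  linear_combination (-(((p : ℂ)) - 1)) * hci + hc
end

section
/- For every prime number p, Cond(V_p) = (p − 1)·√(2(1 − 1/p)). -/
open Matrix Polynomial BigOperators

lemma geom_aux {p : ℕ} (hp : 2 ≤ p) {z : ℂ} (hz : z ^ p = 1) (h1 : z ≠ 1) :
    ∑ j ∈ Finset.range (p - 1), z ^ j = -z⁻¹ := by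
  have hz0 : z ≠ 0 := by
    rintro rfl
    rw [zero_pow (by omega : p ≠ 0)] at hz
    exact zero_ne_one hz
  have hsub : z - 1 ≠ 0 := sub_ne_zero.mpr h1
  have hzp : z ^ (p - 1) = z⁻¹ := by
    have h : z ^ (p - 1) * z = 1 := by
      rw [← pow_succ, show p - 1 + 1 = p by omega]; exact hz
    field_simp
    linear_combination h
  rw [geom_sum_eq h1, hzp]
  field_simp
  ring

/-- For every prime `p`, `Cond(V_p) = (p - 1) * √(2 * (1 - 1/p))`. -/
theorem cond_vand_prime (p : ℕ) (hp : p.Prime)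
    (ζ : Fin p.totient → ℂ) (hζinj : Function.Injective ζ)
    (hζ : ∀ i, IsPrimitiveRoot (ζ i) p) :
    condNum (vand ζ) = ((p : ℝ) - 1) * Real.sqrt (2 * (1 - 1 / (p : ℝ))) := by
  have hp2 : 2 ≤ p := hp.two_le
  have hm : p.totient = p - 1 := Nat.totient_prime hp
  have hpR : (2:ℝ) ≤ (p:ℝ) := by exact_mod_cast hp2
  have hpC : (p : ℂ) ≠ 0 := Nat.cast_ne_zero.mpr (by omega)
  have hcast : ((p - 1 : ℕ):ℝ) = (p:ℝ) - 1 := by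
    rw [Nat.cast_sub (by omega), Nat.cast_one]
  have hpow : ∀ i, ζ i ^ p = 1 := fun i => (hζ i).pow_eq_one
  have hne1 : ∀ i, ζ i ≠ 1 := fun i => (hζ i).ne_one (by omega)
  have hzero : ∀ i, ζ i ≠ 0 := by
    intro i h
    have h2 := hpow i
    rw [h, zero_pow (by omega : p ≠ 0)] at h2
    exact zero_ne_one h2
  have hnorm : ∀ i, ‖ζ i‖ = 1 := fun i =>
    Complex.norm_eq_one_of_pow_eq_one (hpow i) (by omega)
  have hgs : ∀ i, ∑ j : Fin p.totient, ζ i ^ (j:ℕ) = -(ζ i)⁻¹ := by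
    intro i
    rw [Fin.sum_univ_eq_sum_range (fun j => ζ i ^ j), hm]
    exact geom_aux hp2 (hpow i) (hne1 i)
  -- candidate inverse
  set B : Matrix (Fin p.totient) (Fin p.totient) ℂ :=
    Matrix.of (fun j k => ((ζ k)⁻¹ ^ (j:ℕ) - ζ k) / p) with hB
  have hVB : vand ζ * B = 1 := by
    ext i k
    simp only [Matrix.mul_apply, hB, vand, Matrix.of_apply, Matrix.one_apply]
    have expand : ∀ j : Fin p.totient,
        ζ i ^ (j:ℕ) * (((ζ k)⁻¹ ^ (j:ℕ) - ζ k) / ↑p)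
          = ((ζ i * (ζ k)⁻¹) ^ (j:ℕ) - ζ k * ζ i ^ (j:ℕ)) / p := by
      intro j; rw [mul_pow]; ring
    rw [Finset.sum_congr rfl (fun j _ => expand j), ← Finset.sum_div,
      Finset.sum_sub_distrib, ← Finset.mul_sum, hgs i]
    by_cases hik : i = k
    · subst hik
      rw [if_pos rfl, mul_inv_cancel₀ (hzero i)]
      simp only [one_pow, Finset.sum_const, Finset.card_univ, Fintype.card_fin, nsmul_eq_mul,
        mul_one]
      rw [mul_neg, mul_inv_cancel₀ (hzero i), hm]
      have h3 : ((p:ℂ) - 1 - -1) = p := by ring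
      rw [Nat.cast_sub (by omega), Nat.cast_one, h3, div_self hpC]
    · rw [if_neg hik]
      have hwne : ζ i * (ζ k)⁻¹ ≠ 1 := fun h =>
        hik (hζinj ((mul_inv_eq_one₀ (hzero k)).mp h))
      have hwp : (ζ i * (ζ k)⁻¹) ^ p = 1 := by
        rw [mul_pow, inv_pow, hpow, hpow]; simp
      have hsw : ∑ j : Fin p.totient, (ζ i * (ζ k)⁻¹) ^ (j:ℕ) = -(ζ i * (ζ k)⁻¹)⁻¹ := by
        rw [Fin.sum_univ_eq_sum_range (fun j => (ζ i * (ζ k)⁻¹) ^ j), hm]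
        exact geom_aux hp2 hwp hwne
      rw [hsw, _root_.div_eq_zero_iff]
      left
      rw [mul_inv, inv_inv]
      ring
  have hinv : (vand ζ)⁻¹ = B := Matrix.inv_eq_right_inv hVB
  -- Frobenius norm of V
  have hfV : frobNorm (vand ζ) = (p : ℝ) - 1 := by
    unfold frobNorm
    have h1 : ∀ i j : Fin p.totient, ‖(vand ζ) i j‖ ^ 2 = 1 := by
      intro i j
      rw [vand, Matrix.of_apply, norm_pow, hnorm, one_pow, one_pow]
    simp only [h1, Finset.sum_const, Finset.card_univ, Fintype.card_fin, nsmul_eq_mul, mul_one]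
    rw [hm, hcast, Real.sqrt_mul_self (by linarith)]
  -- Frobenius norm of B
  have hfB : frobNorm B = Real.sqrt (2 * (1 - 1 / (p:ℝ))) := by
    unfold frobNorm
    congr 1
    rw [Finset.sum_comm]
    have inner : ∀ k : Fin p.totient,
        ∑ j : Fin p.totient, ‖B j k‖ ^ 2 = 2 / p := by
      intro k
      have hinvp : (ζ k)⁻¹ ^ p = 1 := by rw [inv_pow, hpow, inv_one]
      have hinvne1 : (ζ k)⁻¹ ≠ 1 := fun h => hne1 k (by rwa [inv_eq_one] at h)
      have hsum1 : ∑ j : Fin p.totient, (ζ k)⁻¹ ^ ((j:ℕ)+1) = -1 := by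
        have hh : ∀ j : Fin p.totient, (ζ k)⁻¹ ^ ((j:ℕ)+1) = (ζ k)⁻¹ * (ζ k)⁻¹ ^ (j:ℕ) := by
          intro j; ring
        rw [Finset.sum_congr rfl (fun j _ => hh j), ← Finset.mul_sum,
          Fin.sum_univ_eq_sum_range (fun j => (ζ k)⁻¹ ^ j), hm,
          geom_aux hp2 hinvp hinvne1, inv_inv, mul_neg, inv_mul_cancel₀ (hzero k)]
      have habs1 : ∀ j:ℕ, Complex.normSq ((ζ k)⁻¹ ^ j) = 1 := by
        intro j
        rw [Complex.normSq_eq_norm_sq, norm_pow, norm_inv, hnorm]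
        norm_num
      have hnsζ : Complex.normSq (ζ k) = 1 := by
        rw [Complex.normSq_eq_norm_sq, hnorm]; norm_num
      have hns : ∀ j : Fin p.totient, ‖B j k‖ ^ 2
          = (2 - 2 * ((ζ k)⁻¹ ^ ((j:ℕ)+1)).re) / (p:ℝ)^2 := by
        intro j
        rw [hB, Matrix.of_apply, Complex.sq_norm, map_div₀, Complex.normSq_natCast]
        rw [Complex.normSq_sub, habs1, hnsζ, ← Complex.inv_eq_conj (hnorm k), ← pow_succ]
        rw [sq]
        ring
      rw [Finset.sum_congr rfl (fun j _ => hns j), ← Finset.sum_div]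
      have hsum2 : ∑ j : Fin p.totient, (2 - 2 * ((ζ k)⁻¹ ^ ((j:ℕ)+1)).re)
          = 2 * (p:ℝ) := by
        rw [Finset.sum_sub_distrib, ← Finset.mul_sum, ← Complex.re_sum, hsum1]
        simp only [Finset.sum_const, Finset.card_univ, Fintype.card_fin, nsmul_eq_mul, mul_one]
        rw [hm, hcast]
        simp [Complex.neg_re, Complex.one_re]
        ring
      rw [hsum2]
      field_simp
    rw [Finset.sum_congr rfl (fun k _ => inner k)]
    simp only [Finset.sum_const, Finset.card_univ, Fintype.card_fin, nsmul_eq_mul]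
    rw [hm, hcast]
    field_simp
  unfold condNum
  rw [hinv, hfV, hfB]
end

section
/- For every positive integer n, Tr(G_n^{−1}) = Tr(G_{rad(n)}^{−1}); that is, the trace of the inverse Gram matrix is unchanged upon replacing n by its radical. -/
open Matrix Polynomial BigOperators

private lemma ram_param {n : ℕ} (hn : 0 < n) {w : ℂ} (hw : IsPrimitiveRoot w n) (t : ℤ) :
    ram n t = ∑ a ∈ (Finset.range n).filter n.Coprime, (w ^ a) ^ t := by
  have hinj : ∀ a ∈ (Finset.range n).filter n.Coprime, ∀ b ∈ (Finset.range n).filter n.Coprime,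
      w ^ a = w ^ b → a = b := by
    intro a ha b hb hab
    exact hw.pow_inj (Finset.mem_range.mp (Finset.mem_filter.mp ha).1)
      (Finset.mem_range.mp (Finset.mem_filter.mp hb).1) hab
  have himg : ((Finset.range n).filter n.Coprime).image (w ^ ·) = primitiveRoots n ℂ := by
    apply Finset.eq_of_subset_of_card_le
    · intro z hz
      obtain ⟨a, ha, rfl⟩ := Finset.mem_image.mp hz
      rw [mem_primitiveRoots hn]
      exact hw.pow_of_coprime a (Finset.mem_filter.mp ha).2.symm
    · rw [Complex.card_primitiveRoots, Finset.card_image_of_injOn hinj]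
      rfl
  rw [ram, ← himg, Finset.sum_image hinj]

private lemma ram_factor {n r d : ℕ} (hr : 0 < r) (hd : 0 < d) (hnrd : n = r * d)
    (hcop : ∀ a, n.Coprime a ↔ r.Coprime a) (t : ℤ) :
    ram n t = if (d : ℤ) ∣ t then (d : ℂ) * ram r (t / d) else 0 := by
  have hn : 0 < n := hnrd ▸ Nat.mul_pos hr hd
  obtain ⟨w, hw⟩ : ∃ w : ℂ, IsPrimitiveRoot w n :=
    ⟨_, Complex.isPrimitiveRoot_exp n hn.ne'⟩
  have hw0 : w ≠ 0 := hw.ne_zero hn.ne'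
  have hmod : ∀ a, r.Coprime (a % r) ↔ r.Coprime a := by
    intro a
    rw [Nat.Coprime, Nat.Coprime, Nat.gcd_comm r (a % r), ← Nat.gcd_rec]
  have hwr : IsPrimitiveRoot (w ^ r) d := hw.pow hn hnrd
  have hwd : IsPrimitiveRoot (w ^ d) r := hw.pow hn (by rw [hnrd, mul_comm])
  have hcomm : ∀ (x : ℂ) (c : ℕ) (s : ℤ), (x ^ c) ^ s = (x ^ s) ^ c := by
    intro x c s
    rw [← zpow_natCast x c, ← _root_.zpow_mul, mul_comm, _root_.zpow_mul, zpow_natCast]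
  rw [ram_param hn hw t]
  have hre : ∑ a ∈ (Finset.range n).filter n.Coprime, (w ^ a) ^ t
      = ∑ p ∈ ((Finset.range r).filter r.Coprime) ×ˢ Finset.range d,
          (w ^ (p.1 + r * p.2)) ^ t := by
    apply Finset.sum_nbij' (i := fun a => (a % r, a / r)) (j := fun p => p.1 + r * p.2)
    · intro a ha
      obtain ⟨har, hac⟩ := Finset.mem_filter.mp ha
      refine Finset.mem_product.mpr ⟨Finset.mem_filter.mpr ⟨Finset.mem_range.mpr
        (Nat.mod_lt a hr), ?_⟩, Finset.mem_range.mpr ?_⟩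
      · exact (hmod a).mpr ((hcop a).mp hac)
      · exact Nat.div_lt_of_lt_mul (by rwa [← hnrd, ← Finset.mem_range])
    · intro p hp
      obtain ⟨hp1, hp2⟩ := Finset.mem_product.mp hp
      obtain ⟨hb, hbc⟩ := Finset.mem_filter.mp hp1
      refine Finset.mem_filter.mpr ⟨Finset.mem_range.mpr ?_, ?_⟩
      · have h1 : p.1 < r := Finset.mem_range.mp hb
        have h2 : p.2 + 1 ≤ d := Finset.mem_range.mp hp2
        calc p.1 + r * p.2 < r + r * p.2 := by omega
          _ = r * (p.2 + 1) := by ring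
          _ ≤ r * d := Nat.mul_le_mul_left r h2
          _ = n := hnrd.symm
      · refine (hcop _).mpr ?_
        have h1 : (p.1 + r * p.2) % r = p.1 := by
          rw [Nat.add_mul_mod_self_left, Nat.mod_eq_of_lt (Finset.mem_range.mp hb)]
        rw [← hmod, h1]; exact hbc
    · intro a ha; simp [Nat.mod_add_div]
    · intro p hp
      obtain ⟨hp1, hp2⟩ := Finset.mem_product.mp hp
      obtain ⟨hb, _⟩ := Finset.mem_filter.mp hp1
      have hb' := Finset.mem_range.mp hb
      ext
      · simp [Nat.add_mul_mod_self_left, Nat.mod_eq_of_lt hb']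
      · simp [Nat.add_mul_div_left _ _ hr, Nat.div_eq_of_lt hb']
    · intro a ha; rw [Nat.mod_add_div]
  rw [hre, Finset.sum_product]
  have hterm : ∀ b c, (w ^ (b + r * c)) ^ t = (w ^ b) ^ t * ((w ^ r) ^ t) ^ c := by
    intro b c
    rw [pow_add, pow_mul, mul_zpow, hcomm (w ^ r) c t]
  simp only [hterm]
  rw [← Finset.sum_mul_sum]
  by_cases hdvd : (d : ℤ) ∣ t
  · obtain ⟨t', rfl⟩ := hdvd
    have hy : (w ^ r) ^ ((d:ℤ) * t') = 1 := by
      rw [_root_.zpow_mul, zpow_natCast, ← pow_mul, ← hnrd, hw.pow_eq_one, _root_.one_zpow]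
    rw [if_pos ⟨t', rfl⟩, Int.mul_ediv_cancel_left _ (by exact_mod_cast hd.ne')]
    rw [hy]
    simp only [one_pow, Finset.sum_const, Finset.card_range, nsmul_eq_mul, mul_one]
    rw [ram_param hr hwd t']
    rw [mul_comm]
    congr 1
    apply Finset.sum_congr rfl
    intro b _
    rw [_root_.zpow_mul, zpow_natCast, ← pow_mul, ← pow_mul, mul_comm b d]
  · rw [if_neg hdvd]
    have hy1 : (w ^ r) ^ t ≠ 1 := fun h => hdvd ((hwr.zpow_eq_one_iff_dvd t).mp h)
    have hyd : ((w ^ r) ^ t) ^ d = 1 := by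
      rw [← hcomm, ← pow_mul, ← hnrd, hw.pow_eq_one, _root_.one_zpow]
    rw [geom_sum_eq hy1, hyd]
    simp

private lemma sum_prim_s15 {n : ℕ} (hn : 0 < n) (ζ : Fin n.totient → ℂ)
    (hinj : Function.Injective ζ) (hζ : ∀ i, IsPrimitiveRoot (ζ i) n) (f : ℂ → ℂ) :
    ∑ i, f (ζ i) = ∑ z ∈ primitiveRoots n ℂ, f z := by
  have himg : Finset.univ.image ζ = primitiveRoots n ℂ := by
    apply Finset.eq_of_subset_of_card_le
    · intro z hz
      obtain ⟨i, _, rfl⟩ := Finset.mem_image.mp hz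
      exact (mem_primitiveRoots hn).mpr (hζ i)
    · rw [Complex.card_primitiveRoots, Finset.card_image_of_injective _ hinj,
        Finset.card_univ, Fintype.card_fin]
  rw [← himg, Finset.sum_image fun a _ b _ h => hinj h]

private lemma gram_apply {n : ℕ} (hn : 0 < n) (ζ : Fin n.totient → ℂ)
    (hinj : Function.Injective ζ) (hζ : ∀ i, IsPrimitiveRoot (ζ i) n)
    (j k : Fin n.totient) :
    ((vand ζ)ᴴ * vand ζ) j k = ram n ((k : ℤ) - (j : ℤ)) := by
  rw [Matrix.mul_apply]
  have hterm : ∀ i, (vand ζ)ᴴ j i * vand ζ i k = (ζ i) ^ ((k : ℤ) - (j : ℤ)) := by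
    intro i
    have h0 : ζ i ≠ 0 := (hζ i).ne_zero hn.ne'
    have habs : ‖ζ i‖ = 1 := (hζ i).norm'_eq_one hn.ne'
    rw [Matrix.conjTranspose_apply, vand, Matrix.of_apply, Matrix.of_apply, star_pow]
    rw [show star (ζ i) = (ζ i)⁻¹ from (Complex.inv_eq_conj habs).symm]
    rw [inv_pow, ← zpow_natCast (ζ i) (k : ℕ), ← zpow_natCast (ζ i) (j : ℕ), ← _root_.zpow_neg,
      ← zpow_add₀ h0, sub_eq_neg_add]
  rw [Finset.sum_congr rfl fun i _ => hterm i]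
  exact (sum_prim_s15 hn ζ hinj hζ fun z => z ^ ((k : ℤ) - (j : ℤ))).trans rfl

private theorem main_aux {n r d : ℕ} (hr : 0 < r) (hd : 0 < d) (hnrd : n = r * d)
    (hcop : ∀ a, n.Coprime a ↔ r.Coprime a) (htot : n.totient = r.totient * d)
    (ζ : Fin n.totient → ℂ) (hζinj : Function.Injective ζ)
    (hζ : ∀ i, IsPrimitiveRoot (ζ i) n)
    (ξ : Fin r.totient → ℂ) (hξinj : Function.Injective ξ)
    (hξ : ∀ i, IsPrimitiveRoot (ξ i) r) :
    Matrix.trace (((vand ζ)ᴴ * vand ζ)⁻¹) = Matrix.trace (((vand ξ)ᴴ * vand ξ)⁻¹) := by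
  have hn : 0 < n := hnrd ▸ Nat.mul_pos hr hd
  have hdZ : ((d : ℤ)) ≠ 0 := Int.natCast_ne_zero.mpr hd.ne'
  set A : Matrix (Fin r.totient) (Fin r.totient) ℂ := (vand ξ)ᴴ * vand ξ with hA
  have hdetV : (vand ξ).det ≠ 0 := by
    have hv : vand ξ = Matrix.vandermonde ξ := rfl
    rw [hv]
    exact Matrix.det_vandermonde_ne_zero_iff.mpr hξinj
  have hdetA : IsUnit A.det := by
    rw [hA, Matrix.det_mul, Matrix.det_conjTranspose]
    exact (mul_ne_zero (star_ne_zero.mpr hdetV) hdetV).isUnit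
  have hdC : ((d : ℂ)) ≠ 0 := Nat.cast_ne_zero.mpr hd.ne'
  set C : Matrix (Fin r.totient) (Fin r.totient) ℂ := (d : ℂ) • A with hC
  have hdetC : IsUnit C.det := by
    rw [hC, Matrix.det_smul]
    exact (mul_ne_zero (pow_ne_zero _ hdC) hdetA.ne_zero).isUnit
  let e : Fin r.totient × Fin d ≃ Fin n.totient := finProdFinEquiv.trans (finCongr htot.symm)
  have he : ∀ p : Fin r.totient × Fin d, ((e p : ℕ)) = (p.2 : ℕ) + d * (p.1 : ℕ) := fun p => rfl
  have hblock : (vand ζ)ᴴ * vand ζ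
      = (Matrix.blockDiagonal fun _ : Fin d => C).submatrix e.symm e.symm := by
    ext j k
    rw [gram_apply hn ζ hζinj hζ j k, Matrix.submatrix_apply]
    obtain ⟨p, hp⟩ : ∃ p, e p = j := ⟨e.symm j, e.apply_symm_apply j⟩
    obtain ⟨q, hq⟩ : ∃ q, e q = k := ⟨e.symm k, e.apply_symm_apply k⟩
    rw [← hp, ← hq, Equiv.symm_apply_apply, Equiv.symm_apply_apply]
    obtain ⟨j', s⟩ := p
    obtain ⟨k', t⟩ := q
    have hj : ((e (j', s) : ℕ) : ℤ) = (s : ℕ) + d * (j' : ℕ) := by rw [he]; push_cast; ring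
    have hk : ((e (k', t) : ℕ) : ℤ) = (t : ℕ) + d * (k' : ℕ) := by rw [he]; push_cast; ring
    rw [hj, hk, ram_factor hr hd hnrd hcop, Matrix.blockDiagonal_apply]
    by_cases hst : s = t
    · subst hst
      have hX : ((s:ℕ) + (d:ℤ) * (k':ℕ)) - ((s:ℕ) + (d:ℤ) * (j':ℕ))
          = (d:ℤ) * ((k':ℕ) - (j':ℕ)) := by ring
      rw [hX, if_pos (Dvd.intro _ rfl), Int.mul_ediv_cancel_left _ hdZ, if_pos rfl]
      show (d : ℂ) * ram r ((k':ℤ) - (j':ℤ)) = (d:ℂ) * (((vand ξ)ᴴ * vand ξ) j' k')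
      rw [gram_apply hr ξ hξinj hξ j' k']
    · have hX : ((t:ℕ) + (d:ℤ) * (k':ℕ)) - ((s:ℕ) + (d:ℤ) * (j':ℕ))
          = (d:ℤ) * ((k':ℕ) - (j':ℕ)) + ((t:ℕ) - (s:ℕ)) := by ring
      have hnd : ¬ ((d:ℤ) ∣ ((t:ℕ) + (d:ℤ) * (k':ℕ)) - ((s:ℕ) + (d:ℤ) * (j':ℕ))) := by
        rw [hX, dvd_add_right (Dvd.intro _ rfl)]
        intro hdvd
        have hts : ((t:ℕ):ℤ) - ((s:ℕ):ℤ) = 0 := by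
          refine Int.eq_zero_of_abs_lt_dvd hdvd ?_
          have h1 : ((t:ℕ):ℤ) < d := by exact_mod_cast t.isLt
          have h2 : ((s:ℕ):ℤ) < d := by exact_mod_cast s.isLt
          have h3 : 0 ≤ ((t:ℕ):ℤ) := Int.natCast_nonneg _
          have h4 : 0 ≤ ((s:ℕ):ℤ) := Int.natCast_nonneg _
          rw [abs_lt]; omega
        apply hst
        have : (s:ℕ) = (t:ℕ) := by omega
        exact Fin.ext this
      rw [if_neg hnd, if_neg hst]
  rw [hblock, Matrix.inv_submatrix_equiv]
  have htr : ∀ B : Matrix (Fin r.totient × Fin d) (Fin r.totient × Fin d) ℂ,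
      Matrix.trace (B.submatrix e.symm e.symm) = Matrix.trace B := by
    intro B
    simp only [Matrix.trace, Matrix.diag, Matrix.submatrix_apply]
    exact Equiv.sum_comp e.symm fun p => B p p
  rw [htr]
  have hCC : C * C⁻¹ = 1 := Matrix.mul_nonsing_inv C hdetC
  have hbinv : (Matrix.blockDiagonal fun _ : Fin d => C)⁻¹
      = Matrix.blockDiagonal fun _ : Fin d => C⁻¹ := by
    apply Matrix.inv_eq_right_inv
    rw [← Matrix.blockDiagonal_mul]
    simp only [hCC]
    exact Matrix.blockDiagonal_one
  rw [hbinv, Matrix.trace_blockDiagonal]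
  have hCinv : C⁻¹ = (d : ℂ)⁻¹ • A⁻¹ := by
    apply Matrix.inv_eq_right_inv
    rw [hC, Matrix.smul_mul, Matrix.mul_smul, Matrix.mul_nonsing_inv A hdetA, smul_smul,
      mul_inv_cancel₀ hdC, one_smul]
  rw [hCinv]
  simp only [Matrix.trace_smul, smul_eq_mul, Finset.sum_const, Finset.card_univ,
    Fintype.card_fin, nsmul_eq_mul]
  field_simp

private lemma totient_aux {n r d : ℕ} (hr : 0 < r) (hnrd : n = r * d)
    (hPF : r.primeFactors = n.primeFactors) (hrad : (∏ p ∈ n.primeFactors, p) = r) :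
    n.totient = r.totient * d := by
  have h1 := Nat.totient_mul_prod_primeFactors n
  have h2 := Nat.totient_mul_prod_primeFactors r
  rw [hPF] at h2
  rw [hrad] at h1 h2
  apply Nat.eq_of_mul_eq_mul_right hr
  calc n.totient * r = n * ∏ p ∈ n.primeFactors, (p - 1) := h1
    _ = d * (r * ∏ p ∈ n.primeFactors, (p - 1)) := by rw [hnrd]; ring
    _ = d * (r.totient * r) := by rw [h2]
    _ = r.totient * d * r := by ring

/-- For every positive integer `n`, `Tr(G_n⁻¹) = Tr(G_{rad n}⁻¹)`. -/
theorem trace_inv_gram_eq_trace_inv_gram_rad (n : ℕ) (hn : 0 < n)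
    (ζ : Fin n.totient → ℂ) (hζinj : Function.Injective ζ)
    (hζ : ∀ i, IsPrimitiveRoot (ζ i) n)
    (ξ : Fin (rad n).totient → ℂ) (hξinj : Function.Injective ξ)
    (hξ : ∀ i, IsPrimitiveRoot (ξ i) (rad n)) :
    Matrix.trace (((vand ζ)ᴴ * vand ζ)⁻¹) = Matrix.trace (((vand ξ)ᴴ * vand ξ)⁻¹) := by
  have hrdvd : rad n ∣ n := Nat.prod_primeFactors_dvd n
  have hr : 0 < rad n := Nat.pos_of_dvd_of_pos hrdvd hn
  have hnrd : n = rad n * (n / rad n) := (Nat.mul_div_cancel' hrdvd).symm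
  have hd : 0 < n / rad n := Nat.div_pos (Nat.le_of_dvd hn hrdvd) hr
  have hPF : (rad n).primeFactors = n.primeFactors :=
    Nat.primeFactors_prod fun p hp => Nat.prime_of_mem_primeFactors hp
  have hcop : ∀ a, n.Coprime a ↔ (rad n).Coprime a := by
    intro a
    rcases Nat.eq_zero_or_pos a with rfl | ha
    · simp only [Nat.coprime_zero_right]
      constructor
      · rintro rfl; simp [rad]
      · intro h1
        have h2 : n.primeFactors = ∅ := by rw [← hPF, h1]; simp
        rcases (Nat.primeFactors_eq_empty).mp h2 with rfl | rfl
        · exact absurd hn (lt_irrefl 0)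
        · rfl
    · rw [← Nat.disjoint_primeFactors hn.ne' ha.ne', ← Nat.disjoint_primeFactors hr.ne' ha.ne',
        hPF]
  have htot : n.totient = (rad n).totient * (n / rad n) :=
    totient_aux hr hnrd hPF rfl
  exact main_aux hr hd hnrd hcop htot ζ hζinj hζ ξ hξinj hξ
end

section
/- Let n be a positive integer, m := φ(n), and write V_n^{−1} = (w_{i,k})_{1 ≤ i,k ≤ m}. For all integers i, ℓ with 1 ≤ i ≤ m and ℓ ≥ 0, the complex number S_{i,ℓ} := Σ_{k=1}^m w_{i,k} ζ_k^ℓ is a (rational) integer, i.e., it lies in the image of ℤ in ℂ. -/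
open Matrix Polynomial BigOperators

/-- Writing `W = V_n⁻¹`, for all `i` and all `ℓ ≥ 0` the complex
number `S_{i,ℓ} = ∑ k, W i k * ζ k ^ ℓ` is a rational integer. -/
theorem sum_inv_vand_pow_int (n : ℕ) (hn : 0 < n)
    (ζ : Fin n.totient → ℂ) (hζinj : Function.Injective ζ)
    (hζ : ∀ i, IsPrimitiveRoot (ζ i) n)
    (i : Fin n.totient) (l : ℕ) :
    ∃ z : ℤ, (∑ k, (vand ζ)⁻¹ i k * ζ k ^ l) = (z : ℂ) := by
  have hmpos : 0 < n.totient := Nat.totient_pos.mpr hn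
  set Φ : ℤ[X] := cyclotomic n ℤ with hΦ
  have hmonic : Φ.Monic := cyclotomic.monic n ℤ
  set r : ℤ[X] := (X ^ l : ℤ[X]) %ₘ Φ with hr
  have hdegΦ : Φ.natDegree = n.totient := natDegree_cyclotomic n ℤ
  have hrdeg : r.natDegree < n.totient := by
    rcases eq_or_ne r 0 with h0 | h0
    · simpa [h0] using hmpos
    · have h1 := degree_modByMonic_lt (X ^ l : ℤ[X]) hmonic
      have h2 := natDegree_lt_natDegree h0 h1
      omega
  have key : ∀ k : Fin n.totient,
      ζ k ^ l = ∑ j : Fin n.totient, (r.coeff j : ℂ) * ζ k ^ (j : ℕ) := by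
    intro k
    have hroot : (Φ.map (Int.castRingHom ℂ)).eval (ζ k) = 0 := by
      rw [hΦ, map_cyclotomic]
      have := (hζ k).isRoot_cyclotomic hn
      simpa [Polynomial.IsRoot] using this
    have hdiv : r + Φ * ((X ^ l : ℤ[X]) /ₘ Φ) = X ^ l :=
      modByMonic_add_div (X ^ l : ℤ[X]) Φ
    have heq : ζ k ^ l = (r.map (Int.castRingHom ℂ)).eval (ζ k) := by
      calc ζ k ^ l = ((X ^ l : ℤ[X]).map (Int.castRingHom ℂ)).eval (ζ k) := by
              simp
        _ = ((r + Φ * ((X ^ l : ℤ[X]) /ₘ Φ)).map (Int.castRingHom ℂ)).eval (ζ k) := by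
              rw [hdiv]
        _ = (r.map (Int.castRingHom ℂ)).eval (ζ k) := by
              simp [Polynomial.map_mul, Polynomial.map_add, hroot]
    rw [heq, eval_eq_sum_range' (lt_of_le_of_lt natDegree_map_le hrdeg),
      ← Fin.sum_univ_eq_sum_range]
    exact Finset.sum_congr rfl fun j _ => by simp [mul_comm]
  have hdet : IsUnit (vand ζ).det := by
    have hd : (vand ζ).det = (Matrix.vandermonde ζ).det := rfl
    rw [hd, det_vandermonde, isUnit_iff_ne_zero]
    refine Finset.prod_ne_zero_iff.mpr fun a _ => Finset.prod_ne_zero_iff.mpr fun b hb => ?_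
    have hab : a < b := Finset.mem_Ioi.mp hb
    exact sub_ne_zero.mpr fun h => (ne_of_lt hab) (hζinj h.symm)
  have hinv : (vand ζ)⁻¹ * vand ζ = 1 := nonsing_inv_mul _ hdet
  refine ⟨r.coeff i, ?_⟩
  calc (∑ k, (vand ζ)⁻¹ i k * ζ k ^ l)
      = ∑ k, ∑ j : Fin n.totient, (r.coeff j : ℂ) * ((vand ζ)⁻¹ i k * vand ζ k j) := by
        refine Finset.sum_congr rfl fun k _ => ?_
        rw [key k, Finset.mul_sum]
        exact Finset.sum_congr rfl fun j _ => by simp [vand]; ring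
    _ = ∑ j : Fin n.totient, (r.coeff j : ℂ) * ((vand ζ)⁻¹ * vand ζ) i j := by
        rw [Finset.sum_comm]
        exact Finset.sum_congr rfl fun j _ => by rw [Matrix.mul_apply, Finset.mul_sum]
    _ = (r.coeff i : ℂ) := by
        rw [hinv]; simp [Matrix.one_apply]
end
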